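/- For every point t ∈ Ṙ = ℝ ∪ {∞}, every multiplicative linear functional in the fiber M_t(SO_t) admits a unique extension to a multiplicative linear functional in M_t(SO^◇); hence the fibers M_t(SO_t) and M_t(SO^◇) can be identified: M_t(SO_t) = M_t(SO^◇). -/

import Mathlib

open MeasureTheory Filter Topology Set

noncomputable section

/-- A Banach function norm on nonnegative measurable functions on ℝ (axioms (A1)–(A5)). -/
structure BFN where
  ρ : (ℝ → ENNReal) → ENNReal
  eq_zero_iff : ∀ f : ℝ → ENNReal, Measurable f → (ρ f = 0 ↔ f =ᵐ[volume] 0)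
  smul_eq : ∀ (c : ENNReal) (f : ℝ → ENNReal), Measurable f → ρ (fun x => c * f x) = c * ρ f
  add_le : ∀ f g : ℝ → ENNReal, Measurable f → Measurable g →
    ρ (fun x => f x + g x) ≤ ρ f + ρ g
  mono : ∀ f g : ℝ → ENNReal, Measurable f → Measurable g →
    (∀ᵐ x ∂volume, g x ≤ f x) → ρ g ≤ ρ f
  fatou : ∀ f : ℕ → ℝ → ENNReal, (∀ n, Measurable (f n)) →
    (∀ᵐ x ∂volume, Monotone fun n => f n x) →
    Tendsto (fun n => ρ (f n)) atTop (𝓝 (ρ fun x => ⨆ n, f n x))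
  indicator_lt_top : ∀ E : Set ℝ, MeasurableSet E → volume E < ⊤ → ρ (E.indicator 1) < ⊤
  loc_L1 : ∀ E : Set ℝ, MeasurableSet E → volume E < ⊤ →
    ∃ C : ENNReal, C ≠ 0 ∧ C ≠ ⊤ ∧ ∀ f : ℝ → ENNReal, Measurable f →
      (∫⁻ x in E, f x) ≤ C * ρ f

namespace BFN

variable (N : BFN)

/-- The (extended) norm of a complex-valued function in the Banach function space. -/
def norm' (f : ℝ → ℂ) : ENNReal := N.ρ fun x => (‖f x‖₊ : ENNReal)

/-- Membership in the Banach function space X(ℝ). -/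
def Mem (f : ℝ → ℂ) : Prop := AEMeasurable f volume ∧ N.norm' f < ⊤

/-- A set of functions is dense in X(ℝ). -/
def DenseIn (S : Set (ℝ → ℂ)) : Prop :=
  ∀ f, N.Mem f → ∀ ε : ℝ, 0 < ε → ∃ g ∈ S, N.norm' (fun x => f x - g x) < ENNReal.ofReal ε

/-- Separability of X(ℝ). -/
def Separable : Prop :=
  ∃ D : Set (ℝ → ℂ), D.Countable ∧ (∀ g ∈ D, N.Mem g) ∧ N.DenseIn D

/-- The associate (Köthe dual) norm ρ'. -/
def assoc : (ℝ → ENNReal) → ENNReal := fun g =>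
  ⨆ f : {f : ℝ → ENNReal // Measurable f ∧ N.ρ f ≤ 1}, ∫⁻ x, f.1 x * g x

end BFN

/-- The non-centered Hardy–Littlewood maximal function (of a nonnegative function). -/
def maximalFn (g : ℝ → ENNReal) (x : ℝ) : ENNReal :=
  ⨆ (a : ℝ) (b : ℝ) (_ : a < b) (_ : x ∈ Set.Icc a b),
    (ENNReal.ofReal (b - a))⁻¹ * ∫⁻ y in Set.Icc a b, g y

/-- Boundedness of the Hardy–Littlewood maximal operator with respect to a function norm. -/
def MaximalBounded (ρ : (ℝ → ENNReal) → ENNReal) : Prop :=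
  ∃ C : ENNReal, C ≠ ⊤ ∧ ∀ g : ℝ → ENNReal, Measurable g → ρ (maximalFn g) ≤ C * ρ g

/-- The standing hypotheses: X(ℝ) separable, M bounded on X(ℝ) and on X'(ℝ). -/
def GoodBFN (N : BFN) : Prop := N.Separable ∧ MaximalBounded N.ρ ∧ MaximalBounded N.assoc

/-- The Fourier convolution operator W⁰(b) = F⁻¹ b F, on nice functions. -/
def W0 (b f : ℝ → ℂ) : ℝ → ℂ :=
  FourierTransformInv.fourierInv (fun x => b x * FourierTransform.fourier f x)

/-- A bounded linear operator on X(ℝ) (linearity up to null functions). -/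
structure OpOn (N : BFN) where
  toFun : (ℝ → ℂ) → (ℝ → ℂ)
  maps_mem : ∀ f, N.Mem f → N.Mem (toFun f)
  map_add_ae : ∀ f g, N.Mem f → N.Mem g →
    N.norm' (fun x => toFun (fun y => f y + g y) x - (toFun f x + toFun g x)) = 0
  map_smul_ae : ∀ (c : ℂ) (f), N.Mem f →
    N.norm' (fun x => toFun (fun y => c * f y) x - c * toFun f x) = 0
  bounded : ∃ C : ENNReal, C ≠ ⊤ ∧ ∀ f, N.Mem f → N.norm' (toFun f) ≤ C * N.norm' f

/-- `T` has operator norm at most `C` on X(ℝ). -/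
def OpNormLe (N : BFN) (T : OpOn N) (C : ENNReal) : Prop :=
  ∀ f, N.Mem f → N.norm' (T.toFun f) ≤ C * N.norm' f

/-- `T` is (an extension of) the Fourier convolution operator with symbol `b`:
it agrees a.e. with `W⁰(b)` on `L¹ ∩ L² ∩ X`. -/
def IsMultiplierOp (N : BFN) (b : ℝ → ℂ) (T : OpOn N) : Prop :=
  ∀ f : ℝ → ℂ, Integrable f volume → MemLp f 2 volume → N.Mem f →
    N.norm' (fun x => T.toFun f x - W0 b f x) = 0

/-- `b` is a Fourier multiplier on X(ℝ). -/
def IsMultiplier (N : BFN) (b : ℝ → ℂ) : Prop :=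
  MemLp b ⊤ volume ∧ ∃ T : OpOn N, IsMultiplierOp N b T

/-- The multiplier norm ‖b‖_{M_X} = ‖W⁰(b)‖_{B(X)}. -/
def mNorm (N : BFN) (b : ℝ → ℂ) : ENNReal :=
  sInf {C | ∃ T : OpOn N, IsMultiplierOp N b T ∧ OpNormLe N T C}

/-- A map of functions is a compact operator on X(ℝ): it maps X to X and the image of the
unit ball is totally bounded. -/
def CompactMap (N : BFN) (T : (ℝ → ℂ) → (ℝ → ℂ)) : Prop :=
  (∀ f, N.Mem f → N.Mem (T f)) ∧
  ∀ ε : ℝ, 0 < ε → ∃ S : Set (ℝ → ℂ), S.Finite ∧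
    ∀ f, N.Mem f → N.norm' f ≤ 1 → ∃ g ∈ S, N.norm' (fun x => T f x - g x) < ENNReal.ofReal ε

/-- A bounded linear operator on X(ℝ) is compact. -/
def IsCompactOp (N : BFN) (K : OpOn N) : Prop := CompactMap N K.toFun

/-- The oscillation of `f` over a set `E`. -/
def osc (f : ℝ → ℂ) (E : Set ℝ) : ENNReal :=
  ⨆ s ∈ E, ⨆ t ∈ E, (‖f s - f t‖₊ : ENNReal)

/-- `f` slowly oscillates at a finite point `lam`. -/
def SlowOscAt (f : ℝ → ℂ) (lam : ℝ) : Prop :=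
  ∀ r : ℝ, 0 < r → r < 1 → ∀ ε : ℝ, 0 < ε → ∃ δ : ℝ, 0 < δ ∧ ∀ x : ℝ, 0 < x → x < δ →
    osc f (Set.Icc (lam - x) (lam - r * x) ∪ Set.Icc (lam + r * x) (lam + x)) <
      ENNReal.ofReal ε

/-- `f` slowly oscillates at ∞. -/
def SlowOscAtInf (f : ℝ → ℂ) : Prop :=
  ∀ r : ℝ, 0 < r → r < 1 → ∀ ε : ℝ, 0 < ε → ∃ R : ℝ, 0 < R ∧ ∀ x : ℝ, R < x →
    osc f (Set.Icc (-x) (-(r * x)) ∪ Set.Icc (r * x) x) < ENNReal.ofReal ε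

/-- Boundedness of a function. -/
def Bdd (f : ℝ → ℂ) : Prop := ∃ M : ℝ, ∀ x, ‖f x‖ ≤ M

/-- The algebra SO_t, for t ∈ Ṙ = ℝ ∪ {∞} (encoded as `Option ℝ`, `none` = ∞):
bounded functions, continuous on Ṙ \ {t}, slowly oscillating at t. -/
def SO : Option ℝ → (ℝ → ℂ) → Prop
  | some lam, f => Bdd f ∧ ContinuousOn f {lam}ᶜ ∧
      (∃ L : ℂ, Tendsto f (cocompact ℝ) (𝓝 L)) ∧ SlowOscAt f lam
  | none, f => Bdd f ∧ Continuous f ∧ SlowOscAtInf f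

/-- The operator D_λ a (x) = (x − λ) a'(x). -/
def Dop (lam : ℝ) (a : ℝ → ℂ) : ℝ → ℂ := fun x => ((x : ℂ) - (lam : ℂ)) * deriv a x

/-- The operator D_∞ a (x) = x a'(x). -/
def DopInf (a : ℝ → ℂ) : ℝ → ℂ := fun x => (x : ℂ) * deriv a x

/-- The algebra SO_t^3 of C³ slowly oscillating functions with
lim_{x→t} (D_t^k a)(x) = 0 for k = 1,2,3. -/
def SO3 : Option ℝ → (ℝ → ℂ) → Prop
  | some lam, a => SO (some lam) a ∧ ContDiffOn ℝ 3 a {lam}ᶜ ∧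
      ∀ k : ℕ, 1 ≤ k → k ≤ 3 → Tendsto ((Dop lam)^[k] a) (𝓝[≠] lam) (𝓝 0)
  | none, a => SO none a ∧ ContDiff ℝ 3 a ∧
      ∀ k : ℕ, 1 ≤ k → k ≤ 3 → Tendsto (DopInf^[k] a) (cocompact ℝ) (𝓝 0)

/-- SO_{t,X(ℝ)}: the closure of SO_t^3 in the multiplier norm of X(ℝ). -/
def SOX (N : BFN) (t : Option ℝ) (b : ℝ → ℂ) : Prop :=
  IsMultiplier N b ∧ ∀ ε : ℝ, 0 < ε → ∃ a, SO3 t a ∧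
    IsMultiplier N (fun x => b x - a x) ∧
    mNorm N (fun x => b x - a x) < ENNReal.ofReal ε

/-- The *-algebra generated by all the SO_t, t ∈ Ṙ. -/
inductive SOgen : (ℝ → ℂ) → Prop
  | base (t : Option ℝ) (f : ℝ → ℂ) : SO t f → SOgen f
  | add {f g : ℝ → ℂ} : SOgen f → SOgen g → SOgen (fun x => f x + g x)
  | mul {f g : ℝ → ℂ} : SOgen f → SOgen g → SOgen (fun x => f x * g x)
  | smul (c : ℂ) {f : ℝ → ℂ} : SOgen f → SOgen (fun x => c * f x)
  | star {f : ℝ → ℂ} : SOgen f → SOgen (fun x => starRingEnd ℂ (f x))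

/-- SO^◇: the smallest C*-subalgebra of L^∞(ℝ) containing all SO_t. -/
def SOdiamond (f : ℝ → ℂ) : Prop :=
  MemLp f ⊤ volume ∧ ∀ ε : ℝ, 0 < ε → ∃ g, SOgen g ∧
    eLpNorm (fun x => f x - g x) ⊤ volume < ENNReal.ofReal ε

/-- The algebra generated by all the SO_{t,X(ℝ)}, t ∈ Ṙ. -/
inductive SOXgen (N : BFN) : (ℝ → ℂ) → Prop
  | base (t : Option ℝ) (f : ℝ → ℂ) : SOX N t f → SOXgen N f
  | add {f g : ℝ → ℂ} : SOXgen N f → SOXgen N g → SOXgen N (fun x => f x + g x)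
  | mul {f g : ℝ → ℂ} : SOXgen N f → SOXgen N g → SOXgen N (fun x => f x * g x)
  | smul (c : ℂ) {f : ℝ → ℂ} : SOXgen N f → SOXgen N (fun x => c * f x)

/-- SO_{X(ℝ)}^◇: the smallest Banach subalgebra of M_{X(ℝ)} containing all SO_{t,X(ℝ)}. -/
def SOXdiamond (N : BFN) (b : ℝ → ℂ) : Prop :=
  IsMultiplier N b ∧ ∀ ε : ℝ, 0 < ε → ∃ g, SOXgen N g ∧
    IsMultiplier N (fun x => b x - g x) ∧
    mNorm N (fun x => b x - g x) < ENNReal.ofReal ε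

/-- A multiplicative linear functional (character) on a set `S` of functions
(which respects a.e. equality, as elements of function algebras are a.e.-classes). -/
structure CharOn (S : Set (ℝ → ℂ)) where
  φ : (ℝ → ℂ) → ℂ
  map_ae : ∀ f g : ℝ → ℂ, f ∈ S → g ∈ S → f =ᵐ[volume] g → φ f = φ g
  map_add : ∀ f ∈ S, ∀ g ∈ S, φ (fun x => f x + g x) = φ f + φ g
  map_mul : ∀ f ∈ S, ∀ g ∈ S, φ (fun x => f x * g x) = φ f * φ g
  map_smul : ∀ (c : ℂ), ∀ f ∈ S, φ (fun x => c * f x) = c * φ f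
  map_one : φ (fun _ => 1) = 1

/-- The algebra C(Ṙ): continuous functions on ℝ having a limit at ∞. -/
def CRdot (f : ℝ → ℂ) : Prop := Continuous f ∧ ∃ L : ℂ, Tendsto f (cocompact ℝ) (𝓝 L)

/-- The character `χ` on `S` lies in the fiber over `t ∈ Ṙ`: its restriction to C(Ṙ)
is the evaluation at `t`. -/
def InFiber (S : Set (ℝ → ℂ)) (χ : CharOn S) : Option ℝ → Prop
  | some lam => ∀ f, f ∈ S → CRdot f → χ.φ f = f lam
  | none => ∀ f, f ∈ S → CRdot f → ∀ L : ℂ, Tendsto f (cocompact ℝ) (𝓝 L) → χ.φ f = L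

/-- The spectrum of `f` in the function algebra `S` (invertibility understood a.e.). -/
def specIn (S : Set (ℝ → ℂ)) (f : ℝ → ℂ) : Set ℂ :=
  {z | ¬ ∃ g ∈ S, (fun x => (f x - z) * g x) =ᵐ[volume] (fun _ => (1 : ℂ))}

/-- Positivity of an element of the function algebra `S`: self-adjoint with
spectrum contained in [0, ∞). -/
def IsPositiveIn (S : Set (ℝ → ℂ)) (f : ℝ → ℂ) : Prop :=
  (∀ x, (f x).im = 0) ∧ specIn S f ⊆ {z : ℂ | 0 ≤ z.re ∧ z.im = 0}

/-- A character on a set `S` of operators which factors through the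
compact-equivalence relation `R` (i.e. a character of the Calkin image). -/
structure CharOnOps (S : Set ((ℝ → ℂ) → (ℝ → ℂ)))
    (R : ((ℝ → ℂ) → (ℝ → ℂ)) → ((ℝ → ℂ) → (ℝ → ℂ)) → Prop) where
  φ : ((ℝ → ℂ) → (ℝ → ℂ)) → ℂ
  map_add : ∀ T ∈ S, ∀ U ∈ S, φ (fun f x => T f x + U f x) = φ T + φ U
  map_mul : ∀ T ∈ S, ∀ U ∈ S, φ (fun f => T (U f)) = φ T * φ U
  map_smul : ∀ (c : ℂ), ∀ T ∈ S, φ (fun f x => c * T f x) = c * φ T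
  congr : ∀ T ∈ S, ∀ U ∈ S, R T U → φ T = φ U


section AuxSOExt

/-! ### Oscillation helpers -/
lemma frac3_le {A ε : ℝ} (hA : 0 ≤ A) (hε : 0 < ε) : A * (ε / (3 * (A + 1))) ≤ ε / 3 := by
  rw [mul_div_assoc', div_le_div_iff₀ (by positivity) (by norm_num)]
  nlinarith



lemma osc_le_of_pairs {f : ℝ → ℂ} {E : Set ℝ} {c : ℝ}
    (H : ∀ s ∈ E, ∀ u ∈ E, ‖f s - f u‖ ≤ c) : osc f E ≤ ENNReal.ofReal c := by
  unfold osc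
  refine iSup₂_le fun s hs => iSup₂_le fun u hu => ?_
  rw [← enorm_eq_nnnorm, ← ofReal_norm]
  exact ENNReal.ofReal_le_ofReal (H s hs u hu)

lemma osc_lt_of_pairs {f : ℝ → ℂ} {E : Set ℝ} {c ε : ℝ} (hε : 0 < ε)
    (H : ∀ s ∈ E, ∀ u ∈ E, ‖f s - f u‖ ≤ c) (hc : c < ε) : osc f E < ENNReal.ofReal ε :=
  lt_of_le_of_lt (osc_le_of_pairs H)
    (by rcases le_or_gt 0 c with h | h
        · exact (ENNReal.ofReal_lt_ofReal_iff hε).2 hc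
        · calc ENNReal.ofReal c = 0 := by simp [ENNReal.ofReal_eq_zero.2 h.le]
            _ < ENNReal.ofReal ε := by simpa using ENNReal.ofReal_pos.2 hε)

lemma pairs_lt_of_osc_lt {f : ℝ → ℂ} {E : Set ℝ} {ε : ℝ}
    (h : osc f E < ENNReal.ofReal ε) {s u : ℝ} (hs : s ∈ E) (hu : u ∈ E) :
    ‖f s - f u‖ < ε := by
  have h1 : (‖f s - f u‖₊ : ENNReal) ≤ osc f E := by
    unfold osc
    exact le_iSup₂_of_le s hs (le_iSup₂_of_le u hu le_rfl)
  have h2 : ENNReal.ofReal ‖f s - f u‖ < ENNReal.ofReal ε := by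
    rw [ofReal_norm, enorm_eq_nnnorm]; exact lt_of_le_of_lt h1 h
  exact (ENNReal.ofReal_lt_ofReal_iff_of_nonneg (norm_nonneg _)).1 h2

lemma osc_congr {f g : ℝ → ℂ} {E : Set ℝ} (h : ∀ s ∈ E, f s = g s) : osc f E = osc g E := by
  unfold osc
  refine le_antisymm ?_ ?_ <;>
    refine iSup₂_le fun s hs => iSup₂_le fun u hu => ?_
  · rw [h s hs, h u hu]; exact le_iSup₂_of_le s hs (le_iSup₂_of_le u hu le_rfl)
  · rw [← h s hs, ← h u hu]; exact le_iSup₂_of_le s hs (le_iSup₂_of_le u hu le_rfl)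

/-! ### Membership in the oscillation sets -/

lemma mem_oscSet_dist {lam r x s : ℝ} (hr : 0 < r) (hx : 0 < x)
    (hs : s ∈ Set.Icc (lam - x) (lam - r * x) ∪ Set.Icc (lam + r * x) (lam + x)) :
    dist s lam ≤ x ∧ s ≠ lam := by
  have hrx : 0 < r * x := mul_pos hr hx
  rcases hs with ⟨h1, h2⟩ | ⟨h1, h2⟩
  · constructor
    · rw [Real.dist_eq, abs_le]; constructor <;> nlinarith
    · intro h; rw [h] at h2; nlinarith
  · constructor
    · rw [Real.dist_eq, abs_le]; constructor <;> nlinarith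
    · intro h; rw [h] at h1; nlinarith

lemma mem_oscSetInf_abs {r x s : ℝ} (hr : 0 < r) (hx : 0 < x)
    (hs : s ∈ Set.Icc (-x) (-(r * x)) ∪ Set.Icc (r * x) x) : r * x ≤ |s| := by
  rcases hs with ⟨h1, h2⟩ | ⟨h1, h2⟩
  · calc r * x ≤ -s := by nlinarith
      _ ≤ |s| := neg_le_abs s
  · calc r * x ≤ s := h1
      _ ≤ |s| := le_abs_self s

/-! ### Slow oscillation criteria -/

lemma slowOscAt_comb {f g h : ℝ → ℂ} {lam : ℝ} (hf : SlowOscAt f lam) (hg : SlowOscAt g lam)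
    {A B : ℝ} (hA : 0 ≤ A) (hB : 0 ≤ B)
    (H : ∀ s u, ‖h s - h u‖ ≤ A * ‖f s - f u‖ + B * ‖g s - g u‖) : SlowOscAt h lam := by
  intro r hr hr1 ε hε
  have hεf : 0 < ε / (3 * (A + 1)) := by positivity
  have hεg : 0 < ε / (3 * (B + 1)) := by positivity
  obtain ⟨δ₁, hδ₁, H₁⟩ := hf r hr hr1 _ hεf
  obtain ⟨δ₂, hδ₂, H₂⟩ := hg r hr hr1 _ hεg
  refine ⟨min δ₁ δ₂, lt_min hδ₁ hδ₂, fun x hx hxδ => ?_⟩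
  have o₁ := H₁ x hx (lt_of_lt_of_le hxδ (min_le_left _ _))
  have o₂ := H₂ x hx (lt_of_lt_of_le hxδ (min_le_right _ _))
  refine osc_lt_of_pairs hε (c := 2 * ε / 3) (fun s hs u hu => ?_) (by linarith)
  have p₁ := pairs_lt_of_osc_lt o₁ hs hu
  have p₂ := pairs_lt_of_osc_lt o₂ hs hu
  calc ‖h s - h u‖ ≤ A * ‖f s - f u‖ + B * ‖g s - g u‖ := H s u
    _ ≤ A * (ε / (3 * (A + 1))) + B * (ε / (3 * (B + 1))) :=
        add_le_add (mul_le_mul_of_nonneg_left p₁.le hA) (mul_le_mul_of_nonneg_left p₂.le hB)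
    _ ≤ ε / 3 + ε / 3 := add_le_add (frac3_le hA hε) (frac3_le hB hε)
    _ = 2 * ε / 3 := by ring

lemma slowOscAtInf_comb {f g h : ℝ → ℂ} (hf : SlowOscAtInf f) (hg : SlowOscAtInf g)
    {A B : ℝ} (hA : 0 ≤ A) (hB : 0 ≤ B)
    (H : ∀ s u, ‖h s - h u‖ ≤ A * ‖f s - f u‖ + B * ‖g s - g u‖) : SlowOscAtInf h := by
  intro r hr hr1 ε hε
  have hεf : 0 < ε / (3 * (A + 1)) := by positivity
  have hεg : 0 < ε / (3 * (B + 1)) := by positivity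
  obtain ⟨R₁, hR₁, H₁⟩ := hf r hr hr1 _ hεf
  obtain ⟨R₂, hR₂, H₂⟩ := hg r hr hr1 _ hεg
  refine ⟨max R₁ R₂, lt_max_of_lt_left hR₁, fun x hx => ?_⟩
  have o₁ := H₁ x (lt_of_le_of_lt (le_max_left _ _) hx)
  have o₂ := H₂ x (lt_of_le_of_lt (le_max_right _ _) hx)
  refine osc_lt_of_pairs hε (c := 2 * ε / 3) (fun s hs u hu => ?_) (by linarith)
  have p₁ := pairs_lt_of_osc_lt o₁ hs hu
  have p₂ := pairs_lt_of_osc_lt o₂ hs hu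
  calc ‖h s - h u‖ ≤ A * ‖f s - f u‖ + B * ‖g s - g u‖ := H s u
    _ ≤ A * (ε / (3 * (A + 1))) + B * (ε / (3 * (B + 1))) :=
        add_le_add (mul_le_mul_of_nonneg_left p₁.le hA) (mul_le_mul_of_nonneg_left p₂.le hB)
    _ ≤ ε / 3 + ε / 3 := add_le_add (frac3_le hA hε) (frac3_le hB hε)
    _ = 2 * ε / 3 := by ring

end AuxSOExt
section AuxSOExt2

/-! ### Basic slow oscillation from continuity / limits -/

lemma slowOscAt_of_continuousAt {f : ℝ → ℂ} {lam : ℝ} (hf : ContinuousAt f lam) :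
    SlowOscAt f lam := by
  intro r hr hr1 ε hε
  obtain ⟨δ, hδ, hδ'⟩ := Metric.continuousAt_iff.1 hf (ε / 3) (by linarith)
  refine ⟨δ, hδ, fun x hx hxδ => ?_⟩
  refine osc_lt_of_pairs hε (c := 2 * ε / 3) (fun s hs u hu => ?_) (by linarith)
  have hsd := (mem_oscSet_dist hr hx hs).1
  have hud := (mem_oscSet_dist hr hx hu).1
  have h1 : dist (f s) (f lam) < ε / 3 := hδ' (lt_of_le_of_lt hsd hxδ)
  have h2 : dist (f u) (f lam) < ε / 3 := hδ' (lt_of_le_of_lt hud hxδ)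
  calc ‖f s - f u‖ ≤ ‖f s - f lam‖ + ‖f lam - f u‖ := by
        simpa using norm_sub_le_norm_sub_add_norm_sub (f s) (f lam) (f u)
    _ ≤ ε / 3 + ε / 3 := by
        rw [dist_eq_norm] at h1 h2
        rw [norm_sub_rev (f lam)]
        exact add_le_add h1.le h2.le
    _ ≤ 2 * ε / 3 := by linarith

lemma eventually_cocompact_abs_gt {c : Set ℝ} (hc : c ∈ cocompact ℝ) :
    ∃ R : ℝ, 0 < R ∧ ∀ x : ℝ, R < |x| → x ∈ c := by
  obtain ⟨K, hK, hKsub⟩ := mem_cocompact.1 hc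
  obtain ⟨r, hr⟩ := hK.isBounded.subset_closedBall 0
  refine ⟨max r 0 + 1, by positivity, fun x hx => ?_⟩
  apply hKsub
  intro hxK
  have := hr hxK
  rw [Metric.mem_closedBall, Real.dist_eq, sub_zero] at this
  have h1 : r ≤ max r 0 := le_max_left _ _
  linarith

lemma slowOscAtInf_of_tendsto {f : ℝ → ℂ} {L : ℂ} (hf : Tendsto f (cocompact ℝ) (𝓝 L)) :
    SlowOscAtInf f := by
  intro r hr hr1 ε hε
  have hev : {x : ℝ | dist (f x) L < ε / 3} ∈ cocompact ℝ :=
    hf (Metric.ball_mem_nhds L (by linarith))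
  obtain ⟨R₀, hR₀, hR⟩ := eventually_cocompact_abs_gt hev
  refine ⟨R₀ / r, by positivity, fun x hx => ?_⟩
  have hx0 : 0 < x := lt_trans (by positivity) hx
  refine osc_lt_of_pairs hε (c := 2 * ε / 3) (fun s hs u hu => ?_) (by linarith)
  have hrx : R₀ < r * x := by
    rw [div_lt_iff₀ hr] at hx; linarith
  have hsb : dist (f s) L < ε / 3 := hR s (lt_of_lt_of_le hrx (mem_oscSetInf_abs hr hx0 hs))
  have hub : dist (f u) L < ε / 3 := hR u (lt_of_lt_of_le hrx (mem_oscSetInf_abs hr hx0 hu))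
  calc ‖f s - f u‖ ≤ ‖f s - L‖ + ‖L - f u‖ := by
        simpa using norm_sub_le_norm_sub_add_norm_sub (f s) L (f u)
    _ ≤ ε / 3 + ε / 3 := by
        rw [dist_eq_norm] at hsb hub
        rw [norm_sub_rev L]
        exact add_le_add hsb.le hub.le
    _ ≤ 2 * ε / 3 := by linarith

/-! ### C(Ṙ) ⊆ SO_t and constants -/

lemma CRdot.bdd {f : ℝ → ℂ} (hf : CRdot f) : Bdd f := by
  obtain ⟨hc, L, hL⟩ := hf
  have hev : {x : ℝ | dist (f x) L < 1} ∈ cocompact ℝ := hL (Metric.ball_mem_nhds L one_pos)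
  obtain ⟨K, hK, hKsub⟩ := mem_cocompact.1 hev
  obtain ⟨C, hC⟩ := hK.exists_bound_of_continuousOn hc.continuousOn
  refine ⟨max C (‖L‖ + 1), fun x => ?_⟩
  by_cases hx : x ∈ K
  · exact le_trans (hC x hx) (le_max_left _ _)
  · have := hKsub hx
    simp only [Set.mem_setOf_eq, dist_eq_norm] at this
    calc ‖f x‖ ≤ ‖f x - L‖ + ‖L‖ := by simpa using norm_add_le (f x - L) L
      _ ≤ ‖L‖ + 1 := by linarith
      _ ≤ max C (‖L‖ + 1) := le_max_right _ _

lemma CRdot.so {f : ℝ → ℂ} (hf : CRdot f) (t : Option ℝ) : SO t f := by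
  obtain ⟨hc, L, hL⟩ := id hf
  cases t with
  | some lam => exact ⟨hf.bdd, hc.continuousOn, ⟨L, hL⟩, slowOscAt_of_continuousAt hc.continuousAt⟩
  | none => exact ⟨hf.bdd, hc, slowOscAtInf_of_tendsto hL⟩

lemma SO.const (t : Option ℝ) (c : ℂ) : SO t (fun _ => c) :=
  CRdot.so ⟨continuous_const, c, tendsto_const_nhds⟩ t

lemma SO.one (t : Option ℝ) : SO t (fun _ => (1 : ℂ)) := SO.const t 1

/-! ### Closure properties of SO_t -/

lemma SO.bdd' {t : Option ℝ} {f : ℝ → ℂ} (hf : SO t f) : ∃ M, 0 ≤ M ∧ ∀ x, ‖f x‖ ≤ M := by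
  have hb : Bdd f := by cases t <;> exact hf.1
  obtain ⟨M, hM⟩ := hb
  exact ⟨max M 0, le_max_right _ _, fun x => le_trans (hM x) (le_max_left _ _)⟩

lemma SO.add {t : Option ℝ} {f g : ℝ → ℂ} (hf : SO t f) (hg : SO t g) :
    SO t (fun x => f x + g x) := by
  have hpairs : ∀ s u, ‖(f s + g s) - (f u + g u)‖ ≤ 1 * ‖f s - f u‖ + 1 * ‖g s - g u‖ := by
    intro s u
    calc ‖(f s + g s) - (f u + g u)‖ = ‖(f s - f u) + (g s - g u)‖ := by ring_nf
      _ ≤ ‖f s - f u‖ + ‖g s - g u‖ := norm_add_le _ _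
      _ = 1 * ‖f s - f u‖ + 1 * ‖g s - g u‖ := by ring
  obtain ⟨Mf, hMf⟩ := (by cases t <;> exact hf.1 : Bdd f)
  obtain ⟨Mg, hMg⟩ := (by cases t <;> exact hg.1 : Bdd g)
  have hbdd : Bdd (fun x => f x + g x) :=
    ⟨Mf + Mg, fun x => le_trans (norm_add_le _ _) (add_le_add (hMf x) (hMg x))⟩
  cases t with
  | some lam =>
    obtain ⟨_, hfc, ⟨Lf, hLf⟩, hfs⟩ := hf
    obtain ⟨_, hgc, ⟨Lg, hLg⟩, hgs⟩ := hg
    exact ⟨hbdd, hfc.add hgc, ⟨Lf + Lg, hLf.add hLg⟩,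
      slowOscAt_comb hfs hgs zero_le_one zero_le_one hpairs⟩
  | none =>
    obtain ⟨_, hfc, hfs⟩ := hf
    obtain ⟨_, hgc, hgs⟩ := hg
    exact ⟨hbdd, hfc.add hgc, slowOscAtInf_comb hfs hgs zero_le_one zero_le_one hpairs⟩

lemma SO.mul {t : Option ℝ} {f g : ℝ → ℂ} (hf : SO t f) (hg : SO t g) :
    SO t (fun x => f x * g x) := by
  obtain ⟨Mf, hMf0, hMf⟩ := hf.bdd'
  obtain ⟨Mg, hMg0, hMg⟩ := hg.bdd'
  have hpairs : ∀ s u, ‖f s * g s - f u * g u‖ ≤ Mg * ‖f s - f u‖ + Mf * ‖g s - g u‖ := by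
    intro s u
    calc ‖f s * g s - f u * g u‖ = ‖f s * (g s - g u) + (f s - f u) * g u‖ := by ring_nf
      _ ≤ ‖f s * (g s - g u)‖ + ‖(f s - f u) * g u‖ := norm_add_le _ _
      _ = ‖f s‖ * ‖g s - g u‖ + ‖f s - f u‖ * ‖g u‖ := by rw [norm_mul, norm_mul]
      _ ≤ Mf * ‖g s - g u‖ + ‖f s - f u‖ * Mg := by
          exact add_le_add (mul_le_mul_of_nonneg_right (hMf s) (norm_nonneg _))
            (mul_le_mul_of_nonneg_left (hMg u) (norm_nonneg _))
      _ = Mg * ‖f s - f u‖ + Mf * ‖g s - g u‖ := by ring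
  have hbdd : Bdd (fun x => f x * g x) :=
    ⟨Mf * Mg, fun x => by
      rw [norm_mul]
      exact mul_le_mul (hMf x) (hMg x) (norm_nonneg _) hMf0⟩
  cases t with
  | some lam =>
    obtain ⟨_, hfc, ⟨Lf, hLf⟩, hfs⟩ := hf
    obtain ⟨_, hgc, ⟨Lg, hLg⟩, hgs⟩ := hg
    exact ⟨hbdd, hfc.mul hgc, ⟨Lf * Lg, hLf.mul hLg⟩,
      slowOscAt_comb hfs hgs hMg0 hMf0 hpairs⟩
  | none =>
    obtain ⟨_, hfc, hfs⟩ := hf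
    obtain ⟨_, hgc, hgs⟩ := hg
    exact ⟨hbdd, hfc.mul hgc, slowOscAtInf_comb hfs hgs hMg0 hMf0 hpairs⟩

lemma SO.smul {t : Option ℝ} (c : ℂ) {f : ℝ → ℂ} (hf : SO t f) : SO t (fun x => c * f x) :=
  SO.mul (SO.const t c) hf

lemma SO.sub {t : Option ℝ} {f g : ℝ → ℂ} (hf : SO t f) (hg : SO t g) :
    SO t (fun x => f x - g x) := by
  have e : (fun x => f x - g x) = (fun x => f x + (-1 : ℂ) * g x) := funext fun x => by ring
  rw [e]; exact hf.add (SO.smul (-1) hg)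

lemma SO.conj {t : Option ℝ} {f : ℝ → ℂ} (hf : SO t f) :
    SO t (fun x => (starRingEnd ℂ) (f x)) := by
  have hpairs : ∀ s u, ‖(starRingEnd ℂ) (f s) - (starRingEnd ℂ) (f u)‖ ≤
      1 * ‖f s - f u‖ + 0 * ‖f s - f u‖ := by
    intro s u
    rw [← map_sub, RCLike.norm_conj]
    linarith
  obtain ⟨M, hM0, hM⟩ := hf.bdd'
  have hbdd : Bdd (fun x => (starRingEnd ℂ) (f x)) :=
    ⟨M, fun x => by simpa [RCLike.norm_conj] using hM x⟩
  have hcconj : Continuous (starRingEnd ℂ) := Complex.continuous_conj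
  cases t with
  | some lam =>
    obtain ⟨_, hfc, ⟨Lf, hLf⟩, hfs⟩ := hf
    exact ⟨hbdd, hcconj.comp_continuousOn hfc, ⟨(starRingEnd ℂ) Lf, (hcconj.tendsto Lf).comp hLf⟩,
      slowOscAt_comb hfs hfs zero_le_one le_rfl hpairs⟩
  | none =>
    obtain ⟨_, hfc, hfs⟩ := hf
    exact ⟨hbdd, hcconj.comp hfc, slowOscAtInf_comb hfs hfs zero_le_one le_rfl hpairs⟩

lemma SO.invSub {t : Option ℝ} {f : ℝ → ℂ} {M : ℝ} {z : ℂ} (hf : SO t f)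
    (hM : ∀ x, ‖f x‖ ≤ M) (hz : M < ‖z‖) : SO t (fun x => (f x - z)⁻¹) := by
  have hM0 : 0 ≤ M := le_trans (norm_nonneg _) (hM 0)
  set d : ℝ := ‖z‖ - M with hd
  have hd0 : 0 < d := by rw [hd]; linarith
  have hlow : ∀ x, d ≤ ‖f x - z‖ := fun x =>
    calc d = ‖z‖ - M := rfl
      _ ≤ ‖z‖ - ‖f x‖ := by linarith [hM x]
      _ ≤ ‖z - f x‖ := norm_sub_norm_le z (f x)
      _ = ‖f x - z‖ := norm_sub_rev z (f x)
  have hne : ∀ x, f x - z ≠ 0 := fun x h => by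
    have := hlow x; rw [h, norm_zero] at this; linarith
  have hbdd : Bdd (fun x => (f x - z)⁻¹) := ⟨d⁻¹, fun x => by
    rw [norm_inv]
    exact inv_anti₀ hd0 (hlow x)⟩
  have hpairs : ∀ s u, ‖(f s - z)⁻¹ - (f u - z)⁻¹‖ ≤
      (d * d)⁻¹ * ‖f s - f u‖ + 0 * ‖f s - f u‖ := by
    intro s u
    rw [inv_sub_inv (hne s) (hne u)]
    rw [norm_div, norm_mul]
    have he : (f u - z) - (f s - z) = -(f s - f u) := by ring
    rw [he, norm_neg]
    have h1 : d * d ≤ ‖f s - z‖ * ‖f u - z‖ :=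
      mul_le_mul (hlow s) (hlow u) hd0.le (norm_nonneg _)
    have h2 : 0 < ‖f s - z‖ * ‖f u - z‖ := lt_of_lt_of_le (by positivity) h1
    rw [div_le_iff₀ h2]
    have h3 : (d * d)⁻¹ * ‖f s - f u‖ * (‖f s - z‖ * ‖f u - z‖) ≥
        (d * d)⁻¹ * ‖f s - f u‖ * (d * d) := by
      apply mul_le_mul_of_nonneg_left h1
      positivity
    have h4 : (d * d)⁻¹ * ‖f s - f u‖ * (d * d) = ‖f s - f u‖ := by
      field_simp
    linarith
  have hinvd : (0:ℝ) ≤ (d * d)⁻¹ := by positivity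
  cases t with
  | some lam =>
    obtain ⟨_, hfc, ⟨Lf, hLf⟩, hfs⟩ := hf
    have hLM : ‖Lf‖ ≤ M := le_of_tendsto' hLf.norm hM
    have hLne : Lf - z ≠ 0 := fun h => by
      have : ‖z‖ - ‖Lf‖ ≤ 0 := by
        have := norm_sub_norm_le z Lf
        rw [← neg_sub Lf z, norm_neg, h, norm_zero] at this
        linarith
      linarith
    refine ⟨hbdd, (hfc.sub continuousOn_const).inv₀ (fun x _ => hne x), ⟨(Lf - z)⁻¹,
      ((hLf.sub tendsto_const_nhds).inv₀ hLne)⟩, slowOscAt_comb hfs hfs hinvd le_rfl hpairs⟩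
  | none =>
    obtain ⟨_, hfc, hfs⟩ := hf
    refine ⟨hbdd, (hfc.sub continuous_const).inv₀ (fun x => hne x),
      slowOscAtInf_comb hfs hfs hinvd le_rfl hpairs⟩

end AuxSOExt2
section AuxSOExt3

/-! ### The `Small` predicate: a.e. smallness near `t` -/

def SmallAt : Option ℝ → (ℝ → ℂ) → ℝ → Prop
  | some lam, b, ε => ∃ δ : ℝ, 0 < δ ∧ ∀ᵐ x ∂(volume : Measure ℝ), dist x lam < δ → ‖b x‖ ≤ ε
  | none, b, ε => ∃ R : ℝ, 0 < R ∧ ∀ᵐ x ∂(volume : Measure ℝ), R < |x| → ‖b x‖ ≤ ε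

lemma SmallAt.of_ae {t : Option ℝ} {b : ℝ → ℂ} {ε : ℝ}
    (h : ∀ᵐ x ∂(volume : Measure ℝ), ‖b x‖ ≤ ε) : SmallAt t b ε := by
  cases t <;> exact ⟨1, one_pos, h.mono fun x hx _ => hx⟩

lemma SmallAt.raw {t : Option ℝ} {b₁ b₂ c : ℝ → ℂ} {e₁ e₂ ε : ℝ}
    (h₁ : SmallAt t b₁ e₁) (h₂ : SmallAt t b₂ e₂)
    (H : ∀ᵐ x ∂(volume : Measure ℝ), ‖b₁ x‖ ≤ e₁ → ‖b₂ x‖ ≤ e₂ → ‖c x‖ ≤ ε) :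
    SmallAt t c ε := by
  cases t with
  | some lam =>
    obtain ⟨δ₁, hδ₁, ha₁⟩ := h₁
    obtain ⟨δ₂, hδ₂, ha₂⟩ := h₂
    refine ⟨min δ₁ δ₂, lt_min hδ₁ hδ₂, ?_⟩
    filter_upwards [ha₁, ha₂, H] with x hx₁ hx₂ hx₃ hd
    exact hx₃ (hx₁ (lt_of_lt_of_le hd (min_le_left _ _))) (hx₂ (lt_of_lt_of_le hd (min_le_right _ _)))
  | none =>
    obtain ⟨R₁, hR₁, ha₁⟩ := h₁
    obtain ⟨R₂, hR₂, ha₂⟩ := h₂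
    refine ⟨max R₁ R₂, lt_max_of_lt_left hR₁, ?_⟩
    filter_upwards [ha₁, ha₂, H] with x hx₁ hx₂ hx₃ hd
    exact hx₃ (hx₁ (lt_of_le_of_lt (le_max_left _ _) hd)) (hx₂ (lt_of_le_of_lt (le_max_right _ _) hd))

lemma SmallAt.mono {t : Option ℝ} {b : ℝ → ℂ} {ε ε' : ℝ} (h : SmallAt t b ε) (hle : ε ≤ ε') :
    SmallAt t b ε' :=
  SmallAt.raw h h (Filter.Eventually.of_forall fun x hx _ => le_trans hx hle)

lemma SmallAt.congr {t : Option ℝ} {b b' : ℝ → ℂ} {ε : ℝ} (hbb : b =ᵐ[volume] b')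
    (h : SmallAt t b ε) : SmallAt t b' ε :=
  SmallAt.raw h h (hbb.mono fun x hx h1 _ => hx ▸ h1)

/-! ### Measurability -/

lemma ae_ne_vol (lam : ℝ) : ∀ᵐ x ∂(volume : Measure ℝ), x ≠ lam := by
  rw [ae_iff]
  simp only [not_not, Set.setOf_eq_eq_singleton]
  exact measure_singleton lam

lemma SO.aesm {t : Option ℝ} {f : ℝ → ℂ} (hf : SO t f) : AEStronglyMeasurable f volume := by
  cases t with
  | some lam =>
    have h1 : MeasurableSet ({lam}ᶜ : Set ℝ) := (measurableSet_singleton lam).compl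
    have h2 := hf.2.1.aestronglyMeasurable (μ := volume) h1
    have hmem : ∀ᵐ x ∂(volume : Measure ℝ), x ∈ ({lam}ᶜ : Set ℝ) :=
      (ae_ne_vol lam).mono fun x hx => hx
    rwa [Measure.restrict_eq_self_of_ae_mem hmem] at h2
  | none => exact hf.2.1.aestronglyMeasurable

/-! ### Characters: generic algebraic lemmas -/

lemma CharOn.sub' {S : Set (ℝ → ℂ)} (ψ : CharOn S) {a b : ℝ → ℂ} (ha : a ∈ S) (hb : b ∈ S)
    (hb' : (fun x => (-1 : ℂ) * b x) ∈ S) :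
    ψ.φ (fun x => a x - b x) = ψ.φ a - ψ.φ b := by
  have e : (fun x => a x - b x) = (fun x => a x + (fun y => (-1 : ℂ) * b y) x) :=
    funext fun x => by ring
  rw [e, ψ.map_add a ha _ hb', ψ.map_smul (-1) b hb]
  ring

lemma CharOn.const' {S : Set (ℝ → ℂ)} (ψ : CharOn S) (h1 : (fun _ : ℝ => (1 : ℂ)) ∈ S) (c : ℂ) :
    ψ.φ (fun _ => c) = c := by
  have e : (fun _ : ℝ => c) = (fun x => c * (fun _ : ℝ => (1 : ℂ)) x) := funext fun x => by simp
  rw [e, ψ.map_smul c _ h1, ψ.map_one, mul_one]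

/-! ### Boundedness of characters on SO_t -/

variable {t : Option ℝ} (η : CharOn {f | SO t f})

lemma CharOn.eta_sub {a b : ℝ → ℂ} (ha : SO t a) (hb : SO t b) :
    η.φ (fun x => a x - b x) = η.φ a - η.φ b :=
  CharOn.sub' η ha hb (SO.smul (-1) hb)

lemma CharOn.eta_norm_le {f : ℝ → ℂ} {M : ℝ} (hf : SO t f) (hM : ∀ x, ‖f x‖ ≤ M) :
    ‖η.φ f‖ ≤ M := by
  by_contra hcon
  push_neg at hcon
  set z : ℂ := η.φ f with hz
  have hMz : M < ‖z‖ := hcon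
  have hg : SO t (fun x => (f x - z)⁻¹) := hf.invSub hM hMz
  have hfz : SO t (fun x => f x - z) := hf.sub (SO.const t z)
  have hne : ∀ x, f x - z ≠ 0 := by
    intro x h
    have h1 : ‖z‖ - ‖f x‖ ≤ ‖z - f x‖ := norm_sub_norm_le z (f x)
    rw [← neg_sub (f x) z, norm_neg, h, norm_zero] at h1
    have := hM x
    linarith
  have hmul := η.map_mul (fun x => f x - z) hfz (fun x => (f x - z)⁻¹) hg
  have heq : (fun x => (fun y => f y - z) x * (fun y => (f y - z)⁻¹) x) = (fun _ : ℝ => (1 : ℂ)) :=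
    funext fun x => mul_inv_cancel₀ (hne x)
  rw [heq, η.map_one] at hmul
  have hsub : η.φ (fun x => f x - z) = η.φ f - z := by
    have := CharOn.eta_sub η hf (SO.const t z)
    rw [this, CharOn.const' η (SO.one t) z]
  rw [hsub, ← hz, sub_self, zero_mul] at hmul
  exact one_ne_zero hmul

lemma dense_of_null_compl {p : ℝ → Prop} (hp : ∀ᵐ x ∂(volume : Measure ℝ), p x) :
    Dense {x | p x} :=
  MeasureTheory.Measure.dense_of_ae hp

lemma norm_le_of_ae_of_continuousWithinAt {f : ℝ → ℂ} {M : ℝ} {x : ℝ} {s : Set ℝ}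
    (hs : Dense s) (hsub : ∀ y ∈ s, ‖f y‖ ≤ M) (hc : ContinuousWithinAt f s x) : ‖f x‖ ≤ M := by
  have hne : (𝓝[s] x).NeBot := mem_closure_iff_nhdsWithin_neBot.1 (hs x)
  refine le_of_tendsto (f := fun y => ‖f y‖) (hc.norm) ?_
  exact Filter.eventually_of_mem self_mem_nhdsWithin hsub

lemma CharOn.eta_norm_le_ae {f : ℝ → ℂ} {M : ℝ} (hf : SO t f) (hM0 : 0 ≤ M)
    (hM : ∀ᵐ x ∂(volume : Measure ℝ), ‖f x‖ ≤ M) : ‖η.φ f‖ ≤ M := by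
  cases t with
  | none =>
    refine CharOn.eta_norm_le η hf fun x => ?_
    exact norm_le_of_ae_of_continuousWithinAt (dense_of_null_compl hM)
      (fun y hy => hy) (hf.2.1.continuousAt.continuousWithinAt)
  | some lam =>
    have hlam : ∀ᵐ x ∂(volume : Measure ℝ), x ≠ lam := ae_ne_vol lam
    have hae : ∀ᵐ x ∂(volume : Measure ℝ), ‖f x‖ ≤ M ∧ x ≠ lam := hM.and hlam
    have hdense : Dense {x : ℝ | ‖f x‖ ≤ M ∧ x ≠ lam} := dense_of_null_compl hae
    have hoff : ∀ x, x ≠ lam → ‖f x‖ ≤ M := by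
      intro x hx
      refine norm_le_of_ae_of_continuousWithinAt hdense (fun y hy => hy.1) ?_
      refine ContinuousWithinAt.mono ?_ (fun y (hy : ‖f y‖ ≤ M ∧ y ≠ lam) => hy.2)
      exact (hf.2.1 x hx).mono (fun y (hy : y ∈ ({lam}ᶜ : Set ℝ)) => hy)
    -- modify f at lam
    set f' : ℝ → ℂ := Function.update f lam 0 with hf'
    have hff' : f =ᵐ[volume] f' := by
      filter_upwards [hlam] with x hx
      rw [hf', Function.update_of_ne hx]
    have hf'eq : ∀ x, x ≠ lam → f' x = f x := fun x hx => Function.update_of_ne hx 0 f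
    have hso' : SO (some lam) f' := by
      obtain ⟨⟨Mb, hMb⟩, hc, ⟨L, hL⟩, hs⟩ := hf
      refine ⟨⟨max Mb 0, fun x => ?_⟩, ?_, ⟨L, ?_⟩, ?_⟩
      · by_cases hx : x = lam
        · rw [hx, hf', Function.update_self]
          simp
        · rw [hf'eq x hx]; exact le_trans (hMb x) (le_max_left _ _)
      · exact hc.congr fun x hx => hf'eq x hx
      · refine hL.congr' ?_
        have hev : ({lam}ᶜ : Set ℝ) ∈ cocompact ℝ := isCompact_singleton.compl_mem_cocompact
        exact Filter.eventuallyEq_of_mem hev fun x hx => (hf'eq x hx).symm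
      · intro r hr hr1 ε hε
        obtain ⟨δ, hδ, hH⟩ := hs r hr hr1 ε hε
        refine ⟨δ, hδ, fun x hx hxδ => ?_⟩
        have := hH x hx hxδ
        rwa [osc_congr (g := f') (fun s hsmem => (hf'eq s (mem_oscSet_dist hr hx hsmem).2).symm)]
          at this
    have hb' : ∀ x, ‖f' x‖ ≤ M := by
      intro x
      by_cases hx : x = lam
      · rw [hx, hf', Function.update_self]; simpa using hM0
      · rw [hf'eq x hx]; exact hoff x hx
    have : η.φ f = η.φ f' := η.map_ae f f' hf hso' hff'
    rw [this]
    exact CharOn.eta_norm_le η hso' hb'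

end AuxSOExt3
section AuxSOExt4

/-! ### Cutoff functions -/

lemma cutoff_some (lam : ℝ) {δ : ℝ} (hδ : 0 < δ) :
    ∃ h : ℝ → ℂ, CRdot h ∧ h lam = 1 ∧ (∀ x, ‖h x‖ ≤ 1) ∧ ∀ x, δ ≤ dist x lam → h x = 0 := by
  set hr : ℝ → ℝ := fun x => max 0 (min 1 (2 - 2 * dist x lam / δ)) with hhr
  have hcont : Continuous hr := by
    apply continuous_const.max
    apply continuous_const.min
    exact continuous_const.sub ((continuous_const.mul (continuous_id.dist continuous_const)).div_const δ)
  have hzero : ∀ x, δ ≤ dist x lam → hr x = 0 := by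
    intro x hx
    rw [hhr]
    simp only
    rw [max_eq_left]
    refine le_trans (min_le_right _ _) ?_
    rw [sub_nonpos, le_div_iff₀ hδ]
    linarith
  have hone : ∀ x, ‖((hr x : ℝ) : ℂ)‖ ≤ 1 := by
    intro x
    rw [Complex.norm_real, Real.norm_eq_abs, abs_le]
    constructor
    · refine le_trans (by norm_num) (le_max_left 0 _)
    · exact max_le zero_le_one (min_le_left _ _)
  refine ⟨fun x => (hr x : ℂ), ⟨Complex.continuous_ofReal.comp hcont, 0, ?_⟩, ?_, hone, ?_⟩
  · have hev : (fun x => ((hr x : ℝ) : ℂ)) =ᶠ[cocompact ℝ] (fun _ => (0 : ℂ)) := by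
      have hcc : (Metric.closedBall lam δ)ᶜ ∈ cocompact ℝ :=
        (isCompact_closedBall lam δ).compl_mem_cocompact
      refine Filter.eventuallyEq_of_mem hcc fun x hx => ?_
      have : δ ≤ dist x lam := by
        by_contra hcon
        push_neg at hcon
        exact hx (Metric.mem_closedBall.2 (by rw [dist_comm] at hcon ⊢; exact hcon.le))
      rw [hzero x this]
      norm_num
    exact (tendsto_const_nhds).congr' hev.symm
  · show ((hr lam : ℝ) : ℂ) = 1
    rw [hhr]
    simp only [dist_self]
    norm_num
  · intro x hx
    show ((hr x : ℝ) : ℂ) = 0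
    rw [hzero x hx]
    norm_num

lemma cutoff_none {R : ℝ} (hR : 0 < R) :
    ∃ h : ℝ → ℂ, CRdot h ∧ Tendsto h (cocompact ℝ) (𝓝 1) ∧ (∀ x, ‖h x‖ ≤ 1) ∧
      ∀ x, |x| ≤ R → h x = 0 := by
  set hr : ℝ → ℝ := fun x => max 0 (min 1 (|x| / R - 1)) with hhr
  have hcont : Continuous hr := by
    apply continuous_const.max
    apply continuous_const.min
    exact (continuous_abs.div_const R).sub continuous_const
  have hzero : ∀ x, |x| ≤ R → hr x = 0 := by
    intro x hx
    rw [hhr]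
    simp only
    rw [max_eq_left]
    refine le_trans (min_le_right _ _) ?_
    rw [sub_nonpos, div_le_one hR]
    exact hx
  have honeval : ∀ x, 2 * R ≤ |x| → hr x = 1 := by
    intro x hx
    rw [hhr]
    simp only
    rw [min_eq_left, max_eq_right zero_le_one]
    rw [le_sub_iff_add_le, le_div_iff₀ hR]
    linarith
  have hone : ∀ x, ‖((hr x : ℝ) : ℂ)‖ ≤ 1 := by
    intro x
    rw [Complex.norm_real, Real.norm_eq_abs, abs_le]
    constructor
    · refine le_trans (by norm_num) (le_max_left 0 _)
    · exact max_le zero_le_one (min_le_left _ _)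
  have hlim : Tendsto (fun x => ((hr x : ℝ) : ℂ)) (cocompact ℝ) (𝓝 1) := by
    have hev : (fun x => ((hr x : ℝ) : ℂ)) =ᶠ[cocompact ℝ] (fun _ => (1 : ℂ)) := by
      have hcc : (Metric.closedBall 0 (2 * R))ᶜ ∈ cocompact ℝ :=
        (isCompact_closedBall 0 (2 * R)).compl_mem_cocompact
      refine Filter.eventuallyEq_of_mem hcc fun x hx => ?_
      have hx2 : 2 * R ≤ |x| := by
        by_contra hcon
        push_neg at hcon
        exact hx (Metric.mem_closedBall.2 (by rw [Real.dist_eq, sub_zero]; exact hcon.le))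
      rw [honeval x hx2]
      norm_num
    exact (tendsto_const_nhds).congr' hev.symm
  refine ⟨fun x => (hr x : ℂ), ⟨Complex.continuous_ofReal.comp hcont, 1, hlim⟩, hlim, hone, ?_⟩
  intro x hx
  show ((hr x : ℝ) : ℂ) = 0
  rw [hzero x hx]
  norm_num

/-! ### The key smallness estimate for characters in the fiber over t -/

variable {t : Option ℝ} {η : CharOn {f | SO t f}}

lemma CharOn.eta_small (hη : InFiber {f | SO t f} η t) {b : ℝ → ℂ} {c : ℝ} (hb : SO t b)
    (hc : 0 ≤ c) (hs : SmallAt t b c) : ‖η.φ b‖ ≤ c := by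
  cases t with
  | some lam =>
    obtain ⟨δ, hδ, hae⟩ := hs
    obtain ⟨h, hCR, hl1, hle1, hout⟩ := cutoff_some lam hδ
    have hso : SO (some lam) h := hCR.so _
    have hη1 : η.φ h = 1 := by
      have := hη h hso hCR
      rw [this, hl1]
    have hmul := η.map_mul b hb h hso
    rw [hη1, mul_one] at hmul
    rw [← hmul]
    refine CharOn.eta_norm_le_ae η (hb.mul hso) hc ?_
    filter_upwards [hae] with x hx
    by_cases hdx : dist x lam < δ
    · calc ‖b x * h x‖ = ‖b x‖ * ‖h x‖ := norm_mul _ _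
        _ ≤ c * 1 := mul_le_mul (hx hdx) (hle1 x) (norm_nonneg _) hc
        _ = c := mul_one c
    · push_neg at hdx
      rw [hout x hdx, mul_zero, norm_zero]
      exact hc
  | none =>
    obtain ⟨R, hR, hae⟩ := hs
    obtain ⟨h, hCR, hlim, hle1, hout⟩ := cutoff_none hR
    have hso : SO none h := hCR.so _
    have hη1 : η.φ h = 1 := hη h hso hCR 1 hlim
    have hmul := η.map_mul b hb h hso
    rw [hη1, mul_one] at hmul
    rw [← hmul]
    refine CharOn.eta_norm_le_ae η (hb.mul hso) hc ?_
    filter_upwards [hae] with x hx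
    by_cases hdx : R < |x|
    · calc ‖b x * h x‖ = ‖b x‖ * ‖h x‖ := norm_mul _ _
        _ ≤ c * 1 := mul_le_mul (hx hdx) (hle1 x) (norm_nonneg _) hc
        _ = c := mul_one c
    · push_neg at hdx
      rw [hout x hdx, mul_zero, norm_zero]
      exact hc

/-! ### The value of an extension: `Val` -/

def Val (t : Option ℝ) (η : CharOn {f | SO t f}) (f : ℝ → ℂ) (z : ℂ) : Prop :=
  ∀ ε : ℝ, 0 < ε → ∃ a, SO t a ∧ SmallAt t (fun x => f x - a x) ε ∧ ‖η.φ a - z‖ ≤ ε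

def NearAll (t : Option ℝ) (f : ℝ → ℂ) : Prop :=
  ∀ ε : ℝ, 0 < ε → ∃ a, SO t a ∧ SmallAt t (fun x => f x - a x) ε

lemma eta_diff_small (hη : InFiber {f | SO t f} η t) {f a a' : ℝ → ℂ} {ε ε' : ℝ}
    (hε : 0 ≤ ε) (hε' : 0 ≤ ε') (ha : SO t a) (ha' : SO t a')
    (hs : SmallAt t (fun x => f x - a x) ε) (hs' : SmallAt t (fun x => f x - a' x) ε') :
    ‖η.φ a - η.φ a'‖ ≤ ε + ε' := by
  have hsub : SmallAt t (fun x => a x - a' x) (ε + ε') := by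
    refine SmallAt.raw hs hs' (Filter.Eventually.of_forall fun x h1 h2 => ?_)
    calc ‖a x - a' x‖ = ‖(f x - a' x) - (f x - a x)‖ := by ring_nf
      _ ≤ ‖f x - a' x‖ + ‖f x - a x‖ := norm_sub_le _ _
      _ ≤ ε' + ε := add_le_add h2 h1
      _ = ε + ε' := by ring
  rw [← CharOn.eta_sub η ha ha']
  exact CharOn.eta_small hη (ha.sub ha') (by linarith) hsub

lemma Val.unique (hη : InFiber {f | SO t f} η t) {f : ℝ → ℂ} {z z' : ℂ}
    (h : Val t η f z) (h' : Val t η f z') : z = z' := by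
  have key : ∀ ε : ℝ, 0 < ε → ‖z - z'‖ ≤ 4 * ε := by
    intro ε hε
    obtain ⟨a, ha, hs, hc⟩ := h ε hε
    obtain ⟨a', ha', hs', hc'⟩ := h' ε hε
    have hd := eta_diff_small hη hε.le hε.le ha ha' hs hs'
    calc ‖z - z'‖ = ‖(z - η.φ a) + (η.φ a - η.φ a') + (η.φ a' - z')‖ := by ring_nf
      _ ≤ ‖(z - η.φ a) + (η.φ a - η.φ a')‖ + ‖η.φ a' - z'‖ := norm_add_le _ _
      _ ≤ ‖z - η.φ a‖ + ‖η.φ a - η.φ a'‖ + ‖η.φ a' - z'‖ := by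
          have := norm_add_le (z - η.φ a) (η.φ a - η.φ a')
          linarith
      _ ≤ ε + (ε + ε) + ε := by
          rw [norm_sub_rev] at hc
          exact add_le_add (add_le_add hc hd) hc'
      _ = 4 * ε := by ring
  by_contra hne
  have hpos : 0 < ‖z - z'‖ := by
    rw [norm_pos_iff, sub_ne_zero]
    exact hne
  have := key (‖z - z'‖ / 8) (by linarith)
  linarith

lemma nearAll_val (hη : InFiber {f | SO t f} η t) {f : ℝ → ℂ} (hf : NearAll t f) :
    ∃ z, Val t η f z := by
  have hpos : ∀ n : ℕ, (0 : ℝ) < 1 / (n + 1) := fun n => by positivity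
  set a : ℕ → ℝ → ℂ := fun n => (hf (1 / (n + 1)) (hpos n)).choose with ha
  have hspec : ∀ n, SO t (a n) ∧ SmallAt t (fun x => f x - a n x) (1 / (n + 1)) :=
    fun n => (hf (1 / (n + 1)) (hpos n)).choose_spec
  set u : ℕ → ℂ := fun n => η.φ (a n) with hu
  have hdist : ∀ n m : ℕ, ‖u n - u m‖ ≤ 1 / (n + 1) + 1 / (m + 1) := fun n m =>
    eta_diff_small hη (hpos n).le (hpos m).le (hspec n).1 (hspec m).1 (hspec n).2 (hspec m).2
  have hcauchy : CauchySeq u := by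
    refine cauchySeq_of_le_tendsto_0 (fun N => 2 / (N + 1)) (fun n m N hn hm => ?_) ?_
    · rw [dist_eq_norm]
      have h1 : (1 : ℝ) / (n + 1) ≤ 1 / (N + 1) := by
        apply div_le_div_of_nonneg_left one_pos.le (by positivity)
        exact_mod_cast by omega
      have h2 : (1 : ℝ) / (m + 1) ≤ 1 / (N + 1) := by
        apply div_le_div_of_nonneg_left one_pos.le (by positivity)
        exact_mod_cast by omega
      calc ‖u n - u m‖ ≤ 1 / (n + 1) + 1 / (m + 1) := hdist n m
        _ ≤ 1 / (N + 1) + 1 / (N + 1) := add_le_add h1 h2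
        _ = 2 / (N + 1) := by ring
    · have : Tendsto (fun N : ℕ => 2 * (1 / ((N : ℝ) + 1))) atTop (𝓝 (2 * 0)) :=
        tendsto_one_div_add_atTop_nhds_zero_nat.const_mul 2
      simpa [div_eq_mul_inv] using this
  obtain ⟨z, hz⟩ := cauchySeq_tendsto_of_complete hcauchy
  refine ⟨z, fun ε hε => ?_⟩
  obtain ⟨n, hn⟩ := exists_nat_one_div_lt (show (0:ℝ) < ε / 2 by linarith)
  refine ⟨a n, (hspec n).1, (hspec n).2.mono (by linarith), ?_⟩
  have hten : Tendsto (fun m => ‖u n - u m‖) atTop (𝓝 ‖u n - z‖) :=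
    ((hz.const_sub (u n)).norm)
  have hev : ∀ᶠ m in atTop, ‖u n - u m‖ ≤ ε / 2 + 1 / (↑m + 1) := by
    refine Filter.Eventually.of_forall fun m => ?_
    calc ‖u n - u m‖ ≤ 1 / (n + 1) + 1 / (m + 1) := hdist n m
      _ ≤ ε / 2 + 1 / (m + 1) := by linarith
  have hlim2 : Tendsto (fun m : ℕ => ε / 2 + 1 / ((m : ℝ) + 1)) atTop (𝓝 (ε / 2 + 0)) :=
    tendsto_const_nhds.add tendsto_one_div_add_atTop_nhds_zero_nat
  have := le_of_tendsto_of_tendsto' hten hlim2 fun m => by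
    calc ‖u n - u m‖ ≤ 1 / (n + 1) + 1 / (m + 1) := hdist n m
      _ ≤ ε / 2 + 1 / (m + 1) := by linarith
  rw [hu] at this
  calc ‖η.φ (a n) - z‖ = ‖u n - z‖ := rfl
    _ ≤ ε / 2 + 0 := this
    _ ≤ ε := by linarith

end AuxSOExt4
section AuxSOExt5

/-! ### Properties of SOgen -/

lemma SOgen.bdd' {f : ℝ → ℂ} (hf : SOgen f) : ∃ M, 0 ≤ M ∧ ∀ x, ‖f x‖ ≤ M := by
  induction hf with
  | base t f h => exact h.bdd'
  | add hf hg ihf ihg =>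
    obtain ⟨Mf, hMf0, hMf⟩ := ihf
    obtain ⟨Mg, hMg0, hMg⟩ := ihg
    exact ⟨Mf + Mg, by linarith, fun x => le_trans (norm_add_le _ _) (add_le_add (hMf x) (hMg x))⟩
  | mul hf hg ihf ihg =>
    obtain ⟨Mf, hMf0, hMf⟩ := ihf
    obtain ⟨Mg, hMg0, hMg⟩ := ihg
    exact ⟨Mf * Mg, by positivity, fun x => by
      rw [norm_mul]; exact mul_le_mul (hMf x) (hMg x) (norm_nonneg _) hMf0⟩
  | smul c hf ihf =>
    obtain ⟨Mf, hMf0, hMf⟩ := ihf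
    exact ⟨‖c‖ * Mf, by positivity, fun x => by
      rw [norm_mul]; exact mul_le_mul_of_nonneg_left (hMf x) (norm_nonneg c)⟩
  | star hf ihf =>
    obtain ⟨Mf, hMf0, hMf⟩ := ihf
    exact ⟨Mf, hMf0, fun x => by rw [RCLike.norm_conj]; exact hMf x⟩

lemma SOgen.aesm {f : ℝ → ℂ} (hf : SOgen f) : AEStronglyMeasurable f volume := by
  induction hf with
  | base t f h => exact h.aesm
  | add hf hg ihf ihg => exact ihf.add ihg
  | mul hf hg ihf ihg => exact ihf.mul ihg
  | smul c hf ihf => exact (aestronglyMeasurable_const (b := c)).mul ihf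
  | star hf ihf => exact Complex.continuous_conj.comp_aestronglyMeasurable ihf

lemma SOgen.const (c : ℂ) : SOgen (fun _ : ℝ => c) := SOgen.base none _ (SO.const none c)

lemma SOgen.pow {g : ℝ → ℂ} (hg : SOgen g) (n : ℕ) : SOgen (fun x => g x ^ n) := by
  induction n with
  | zero =>
    have e : (fun x => g x ^ 0) = (fun _ : ℝ => (1 : ℂ)) := funext fun x => by norm_num
    rw [e]; exact SOgen.const 1
  | succ n ih =>
    have e : (fun x => g x ^ (n + 1)) = (fun x => (fun y => g y ^ n) x * g x) :=
      funext fun x => by rw [pow_succ]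
    rw [e]; exact SOgen.mul ih hg

lemma SOgen.polysum {g : ℝ → ℂ} (hg : SOgen g) (c : ℕ → ℂ) (n : ℕ) :
    SOgen (fun x => ∑ k ∈ Finset.range n, c k * g x ^ k) := by
  induction n with
  | zero =>
    have e : (fun x => ∑ k ∈ Finset.range 0, c k * g x ^ k) = (fun _ : ℝ => (0 : ℂ)) :=
      funext fun x => by simp
    rw [e]; exact SOgen.const 0
  | succ n ih =>
    have e : (fun x => ∑ k ∈ Finset.range (n + 1), c k * g x ^ k) =
        (fun x => (fun y => ∑ k ∈ Finset.range n, c k * g y ^ k) x +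
          (fun y => c n * (fun w => g w ^ n) y) x) :=
      funext fun x => by rw [Finset.sum_range_succ]
    rw [e]; exact SOgen.add ih (SOgen.smul (c n) (hg.pow n))

/-! ### SOdiamond: convenient characterization -/

lemma ae_norm_le_of_eLpNorm_lt {g : ℝ → ℂ} {ε : ℝ}
    (h : eLpNorm g ⊤ volume < ENNReal.ofReal ε) : ∀ᵐ x ∂(volume : Measure ℝ), ‖g x‖ ≤ ε := by
  rw [eLpNorm_exponent_top] at h
  filter_upwards [ae_le_eLpNormEssSup (f := g) (μ := volume)] with x hx
  have h2 : ENNReal.ofReal ‖g x‖ < ENNReal.ofReal ε := by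
    rw [ofReal_norm, enorm_eq_nnnorm]
    exact lt_of_le_of_lt hx h
  exact ((ENNReal.ofReal_lt_ofReal_iff_of_nonneg (norm_nonneg _)).1 h2).le

lemma eLpNorm_top_le_ofReal {g : ℝ → ℂ} {C : ℝ}
    (h : ∀ᵐ x ∂(volume : Measure ℝ), ‖g x‖ ≤ C) : eLpNorm g ⊤ volume ≤ ENNReal.ofReal C := by
  rw [eLpNorm_exponent_top]
  exact eLpNormEssSup_le_of_ae_bound h

lemma eLpNorm_top_lt_ofReal {g : ℝ → ℂ} {C ε : ℝ} (hC : 0 ≤ C) (hCe : C < ε)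
    (h : ∀ᵐ x ∂(volume : Measure ℝ), ‖g x‖ ≤ C) : eLpNorm g ⊤ volume < ENNReal.ofReal ε :=
  lt_of_le_of_lt (eLpNorm_top_le_ofReal h)
    ((ENNReal.ofReal_lt_ofReal_iff (lt_of_le_of_lt hC hCe)).2 hCe)

lemma sodiamond_iff {f : ℝ → ℂ} : SOdiamond f ↔
    AEStronglyMeasurable f volume ∧ (∃ M, 0 ≤ M ∧ ∀ᵐ x ∂(volume : Measure ℝ), ‖f x‖ ≤ M) ∧
      ∀ ε : ℝ, 0 < ε → ∃ g, SOgen g ∧ ∀ᵐ x ∂(volume : Measure ℝ), ‖f x - g x‖ ≤ ε := by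
  constructor
  · rintro ⟨⟨hsm, hlt⟩, happ⟩
    refine ⟨hsm, ?_, ?_⟩
    · refine ⟨(eLpNorm f ⊤ volume).toReal, ENNReal.toReal_nonneg, ?_⟩
      rw [eLpNorm_exponent_top] at hlt ⊢
      filter_upwards [ae_le_eLpNormEssSup (f := f) (μ := volume)] with x hx
      have h2 := ENNReal.toReal_mono hlt.ne hx
      simpa using h2
    · intro ε hε
      obtain ⟨g, hg, hlt'⟩ := happ ε hε
      exact ⟨g, hg, ae_norm_le_of_eLpNorm_lt hlt'⟩
  · rintro ⟨hsm, ⟨M, hM0, hM⟩, happ⟩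
    refine ⟨⟨hsm, ?_⟩, ?_⟩
    · exact lt_of_le_of_lt (eLpNorm_top_le_ofReal hM) ENNReal.ofReal_lt_top
    · intro ε hε
      obtain ⟨g, hg, hae⟩ := happ (ε / 2) (by linarith)
      exact ⟨g, hg, eLpNorm_top_lt_ofReal (by linarith) (by linarith) hae⟩

lemma SOgen.sodiamond {g : ℝ → ℂ} (hg : SOgen g) : SOdiamond g := by
  obtain ⟨M, hM0, hM⟩ := hg.bdd'
  refine sodiamond_iff.2 ⟨hg.aesm, ⟨M, hM0, Filter.Eventually.of_forall hM⟩, fun ε hε =>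
    ⟨g, hg, Filter.Eventually.of_forall fun x => by simp [hε.le]⟩⟩

lemma SO.sodiamond {t : Option ℝ} {f : ℝ → ℂ} (hf : SO t f) : SOdiamond f :=
  (SOgen.base t f hf).sodiamond

lemma SOdiamond.aebound {f : ℝ → ℂ} (hf : SOdiamond f) :
    ∃ M, 0 ≤ M ∧ ∀ᵐ x ∂(volume : Measure ℝ), ‖f x‖ ≤ M :=
  (sodiamond_iff.1 hf).2.1

lemma SOdiamond.add {f g : ℝ → ℂ} (hf : SOdiamond f) (hg : SOdiamond g) :
    SOdiamond (fun x => f x + g x) := by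
  obtain ⟨hfm, ⟨Mf, hMf0, hMf⟩, hfa⟩ := sodiamond_iff.1 hf
  obtain ⟨hgm, ⟨Mg, hMg0, hMg⟩, hga⟩ := sodiamond_iff.1 hg
  refine sodiamond_iff.2 ⟨hfm.add hgm, ⟨Mf + Mg, by linarith, ?_⟩, ?_⟩
  · filter_upwards [hMf, hMg] with x h1 h2
    exact le_trans (norm_add_le _ _) (add_le_add h1 h2)
  · intro ε hε
    obtain ⟨a, ha, haa⟩ := hfa (ε / 2) (by linarith)
    obtain ⟨b, hb, hba⟩ := hga (ε / 2) (by linarith)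
    refine ⟨fun x => a x + b x, SOgen.add ha hb, ?_⟩
    filter_upwards [haa, hba] with x h1 h2
    calc ‖f x + g x - (a x + b x)‖ = ‖(f x - a x) + (g x - b x)‖ := by ring_nf
      _ ≤ ‖f x - a x‖ + ‖g x - b x‖ := norm_add_le _ _
      _ ≤ ε := by linarith

lemma SOdiamond.smul (c : ℂ) {f : ℝ → ℂ} (hf : SOdiamond f) : SOdiamond (fun x => c * f x) := by
  obtain ⟨hfm, ⟨Mf, hMf0, hMf⟩, hfa⟩ := sodiamond_iff.1 hf
  refine sodiamond_iff.2 ⟨(aestronglyMeasurable_const (b := c)).mul hfm,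
    ⟨‖c‖ * Mf, by positivity, ?_⟩, ?_⟩
  · filter_upwards [hMf] with x h1
    rw [norm_mul]
    exact mul_le_mul_of_nonneg_left h1 (norm_nonneg c)
  · intro ε hε
    have hc1 : 0 < ‖c‖ + 1 := by positivity
    obtain ⟨a, ha, haa⟩ := hfa (ε / (‖c‖ + 1)) (by positivity)
    refine ⟨fun x => c * a x, SOgen.smul c ha, ?_⟩
    filter_upwards [haa] with x h1
    calc ‖c * f x - c * a x‖ = ‖c‖ * ‖f x - a x‖ := by rw [← norm_mul]; ring_nf
      _ ≤ ‖c‖ * (ε / (‖c‖ + 1)) := mul_le_mul_of_nonneg_left h1 (norm_nonneg c)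
      _ ≤ (‖c‖ + 1) * (ε / (‖c‖ + 1)) := by
          apply mul_le_mul_of_nonneg_right (by linarith) (by positivity)
      _ = ε := by field_simp
  
lemma SOdiamond.sub {f g : ℝ → ℂ} (hf : SOdiamond f) (hg : SOdiamond g) :
    SOdiamond (fun x => f x - g x) := by
  have e : (fun x => f x - g x) = (fun x => f x + (fun y => (-1 : ℂ) * g y) x) :=
    funext fun x => by ring
  rw [e]; exact hf.add (hg.smul (-1))

lemma SOdiamond.mul {f g : ℝ → ℂ} (hf : SOdiamond f) (hg : SOdiamond g) :
    SOdiamond (fun x => f x * g x) := by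
  obtain ⟨hfm, ⟨Mf, hMf0, hMf⟩, hfa⟩ := sodiamond_iff.1 hf
  obtain ⟨hgm, ⟨Mg, hMg0, hMg⟩, hga⟩ := sodiamond_iff.1 hg
  refine sodiamond_iff.2 ⟨hfm.mul hgm, ⟨Mf * Mg, by positivity, ?_⟩, ?_⟩
  · filter_upwards [hMf, hMg] with x h1 h2
    rw [norm_mul]
    exact mul_le_mul h1 h2 (norm_nonneg _) hMf0
  · intro ε hε
    have hC : 0 < Mf + Mg + 2 := by linarith
    set ε' : ℝ := min 1 (ε / (Mf + Mg + 2)) with hε'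
    have hε'0 : 0 < ε' := lt_min one_pos (by positivity)
    obtain ⟨a, ha, haa⟩ := hfa ε' hε'0
    obtain ⟨b, hb, hba⟩ := hga ε' hε'0
    refine ⟨fun x => a x * b x, SOgen.mul ha hb, ?_⟩
    filter_upwards [haa, hba, hMf, hMg] with x h1 h2 h3 h4
    have hbx : ‖b x‖ ≤ Mg + 1 := by
      calc ‖b x‖ = ‖g x - (g x - b x)‖ := by ring_nf
        _ ≤ ‖g x‖ + ‖g x - b x‖ := norm_sub_le _ _
        _ ≤ Mg + 1 := add_le_add h4 (le_trans h2 (min_le_left _ _))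
    have key : ‖f x * g x - a x * b x‖ ≤ (Mf + Mg + 1) * ε' := by
      calc ‖f x * g x - a x * b x‖ = ‖f x * (g x - b x) + (f x - a x) * b x‖ := by ring_nf
        _ ≤ ‖f x * (g x - b x)‖ + ‖(f x - a x) * b x‖ := norm_add_le _ _
        _ = ‖f x‖ * ‖g x - b x‖ + ‖f x - a x‖ * ‖b x‖ := by rw [norm_mul, norm_mul]
        _ ≤ Mf * ε' + ε' * (Mg + 1) := by
            exact add_le_add (mul_le_mul h3 h2 (norm_nonneg _) hMf0)
              (mul_le_mul h1 hbx (norm_nonneg _) hε'0.le)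
        _ = (Mf + Mg + 1) * ε' := by ring
    refine le_trans key ?_
    calc (Mf + Mg + 1) * ε' ≤ (Mf + Mg + 2) * (ε / (Mf + Mg + 2)) := by
          apply mul_le_mul (by linarith) (min_le_right _ _) hε'0.le (by linarith)
      _ = ε := by field_simp

lemma SOdiamond.one : SOdiamond (fun _ : ℝ => (1 : ℂ)) := (SO.one none).sodiamond

end AuxSOExt5
section AuxSOExt6

/-! ### Geometric series approximation of the inverse -/

lemma geom_inv_aux (w ζ : ℂ) (hw : w ≠ ζ) (hz : ζ ≠ 0) (n : ℕ) :
    (w - ζ)⁻¹ + ∑ k ∈ Finset.range (n + 1), (ζ ^ (k + 1))⁻¹ * w ^ k =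
      (w / ζ) ^ (n + 1) * (w - ζ)⁻¹ := by
  have hwz : w - ζ ≠ 0 := sub_ne_zero.2 hw
  induction n with
  | zero =>
    rw [Finset.sum_range_one, pow_zero, mul_one, zero_add, pow_one, pow_one]
    field_simp
    ring
  | succ n ih =>
    rw [Finset.sum_range_succ, ← add_assoc, ih]
    rw [div_pow, div_pow]
    field_simp
    ring

lemma geom_inv_tail {w ζ : ℂ} {R : ℝ} (hw : ‖w‖ ≤ R) (hR : R < ‖ζ‖) (n : ℕ) :
    ‖(w - ζ)⁻¹ - ∑ k ∈ Finset.range (n + 1), (-(ζ ^ (k + 1))⁻¹) * w ^ k‖ ≤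
      (R / ‖ζ‖) ^ (n + 1) * (‖ζ‖ - R)⁻¹ := by
  have hR0 : 0 ≤ R := le_trans (norm_nonneg w) hw
  have hz0 : ζ ≠ 0 := by
    intro h; rw [h, norm_zero] at hR; linarith
  have hwz : w ≠ ζ := by
    intro h; rw [h] at hw; linarith
  have he : (w - ζ)⁻¹ - ∑ k ∈ Finset.range (n + 1), (-(ζ ^ (k + 1))⁻¹) * w ^ k =
      (w - ζ)⁻¹ + ∑ k ∈ Finset.range (n + 1), (ζ ^ (k + 1))⁻¹ * w ^ k := by
    rw [sub_eq_add_neg, ← Finset.sum_neg_distrib]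
    congr 1
    refine Finset.sum_congr rfl fun k _ => by ring
  rw [he, geom_inv_aux w ζ hwz hz0 n]
  have hlow : ‖ζ‖ - R ≤ ‖w - ζ‖ := by
    calc ‖ζ‖ - R ≤ ‖ζ‖ - ‖w‖ := by linarith
      _ ≤ ‖ζ - w‖ := norm_sub_norm_le ζ w
      _ = ‖w - ζ‖ := norm_sub_rev ζ w
  have hpos : 0 < ‖ζ‖ - R := by linarith
  rw [norm_mul, norm_pow, norm_div, norm_inv]
  have h1 : (‖w‖ / ‖ζ‖) ^ (n + 1) ≤ (R / ‖ζ‖) ^ (n + 1) := by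
    gcongr
  have h2 : ‖w - ζ‖⁻¹ ≤ (‖ζ‖ - R)⁻¹ := inv_anti₀ hpos hlow
  exact mul_le_mul h1 h2 (by positivity) (by positivity)

/-! ### Inverse closedness of SOdiamond -/

lemma SOdiamond.invSub {f : ℝ → ℂ} {M : ℝ} {ζ : ℂ} (hf : SOdiamond f)
    (hM : ∀ᵐ x ∂(volume : Measure ℝ), ‖f x‖ ≤ M) (hM0 : 0 ≤ M) (hζ : M < ‖ζ‖) :
    SOdiamond (fun x => (f x - ζ)⁻¹) := by
  obtain ⟨hfm, _, hfa⟩ := sodiamond_iff.1 hf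
  set d : ℝ := ‖ζ‖ - M with hd
  have hd0 : 0 < d := by rw [hd]; linarith
  have hζ0 : ζ ≠ 0 := by
    intro h; rw [h, norm_zero] at hζ; linarith
  have hlow : ∀ x, ‖f x‖ ≤ M → d ≤ ‖f x - ζ‖ := by
    intro x hx
    calc d = ‖ζ‖ - M := rfl
      _ ≤ ‖ζ‖ - ‖f x‖ := by linarith
      _ ≤ ‖ζ - f x‖ := norm_sub_norm_le ζ (f x)
      _ = ‖f x - ζ‖ := norm_sub_rev ζ (f x)
  refine sodiamond_iff.2 ⟨?_, ⟨d⁻¹, by positivity, ?_⟩, ?_⟩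
  · exact ((hfm.aemeasurable.sub aemeasurable_const).inv).aestronglyMeasurable
  · filter_upwards [hM] with x hx
    rw [norm_inv]
    exact inv_anti₀ hd0 (hlow x hx)
  · intro ε hε
    set δ : ℝ := min (d / 2) (ε * d * d / 8) with hδ
    have hδ0 : 0 < δ := lt_min (by linarith) (by positivity)
    have hδd : δ ≤ d / 2 := min_le_left _ _
    obtain ⟨g, hg, hga⟩ := hfa δ hδ0
    set R : ℝ := M + δ with hRdef
    have hR0 : 0 ≤ R := by positivity
    have hRζ : R < ‖ζ‖ := by
      rw [hRdef, hd] at *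
      linarith
    have hposζR : 0 < ‖ζ‖ - R := by linarith
    -- choose n with geometric tail small
    have hqlt : R / ‖ζ‖ < 1 := by
      rw [div_lt_one (by linarith)]
      exact hRζ
    have hq0 : 0 ≤ R / ‖ζ‖ := by positivity
    obtain ⟨n, hn⟩ := exists_pow_lt_of_lt_one
      (show (0:ℝ) < ε / 2 * (‖ζ‖ - R) by positivity) hqlt
    have htail : (R / ‖ζ‖) ^ (n + 1) * (‖ζ‖ - R)⁻¹ ≤ ε / 2 := by
      have h1 : (R / ‖ζ‖) ^ (n + 1) ≤ (R / ‖ζ‖) ^ n := pow_le_pow_of_le_one hq0 hqlt.le (by omega)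
      have h2 : (R / ‖ζ‖) ^ (n + 1) < ε / 2 * (‖ζ‖ - R) := lt_of_le_of_lt h1 hn
      rw [← div_eq_mul_inv, div_le_iff₀ hposζR]
      exact h2.le
    refine ⟨fun x => ∑ k ∈ Finset.range (n + 1), (-(ζ ^ (k + 1))⁻¹) * g x ^ k,
      SOgen.polysum hg _ (n + 1), ?_⟩
    filter_upwards [hM, hga] with x hx hgx
    have hgR : ‖g x‖ ≤ R := by
      calc ‖g x‖ = ‖f x - (f x - g x)‖ := by ring_nf
        _ ≤ ‖f x‖ + ‖f x - g x‖ := norm_sub_le _ _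
        _ ≤ M + δ := add_le_add hx hgx
    have hgζ : g x ≠ ζ := by
      intro h; rw [h] at hgR; linarith
    have hfζ : f x - ζ ≠ 0 := by
      have := hlow x hx
      intro h; rw [h, norm_zero] at this; linarith
    have hgζ' : g x - ζ ≠ 0 := sub_ne_zero.2 hgζ
    have hglow : ‖ζ‖ - R ≤ ‖g x - ζ‖ := by
      calc ‖ζ‖ - R ≤ ‖ζ‖ - ‖g x‖ := by linarith
        _ ≤ ‖ζ - g x‖ := norm_sub_norm_le ζ (g x)
        _ = ‖g x - ζ‖ := norm_sub_rev ζ (g x)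
    have hpart1 : ‖(f x - ζ)⁻¹ - (g x - ζ)⁻¹‖ ≤ ε / 2 := by
      rw [inv_sub_inv hfζ hgζ', norm_div, norm_mul]
      have he : (g x - ζ) - (f x - ζ) = -(f x - g x) := by ring
      rw [he, norm_neg]
      have hd2 : 0 < d / 2 := by linarith
      have hprod : d * (d / 2) ≤ ‖f x - ζ‖ * ‖g x - ζ‖ := by
        apply mul_le_mul (hlow x hx) (le_trans (by linarith) hglow) hd2.le (norm_nonneg _)
      have hprod0 : 0 < ‖f x - ζ‖ * ‖g x - ζ‖ := lt_of_lt_of_le (by positivity) hprod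
      rw [div_le_iff₀ hprod0]
      calc ‖f x - g x‖ ≤ δ := hgx
        _ ≤ ε * d * d / 8 := min_le_right _ _
        _ ≤ ε / 2 * (d * (d / 2)) := by nlinarith
        _ ≤ ε / 2 * (‖f x - ζ‖ * ‖g x - ζ‖) := by
            apply mul_le_mul_of_nonneg_left hprod (by linarith)
    have hpart2 : ‖(g x - ζ)⁻¹ - ∑ k ∈ Finset.range (n + 1), (-(ζ ^ (k + 1))⁻¹) * g x ^ k‖ ≤
        ε / 2 := le_trans (geom_inv_tail hgR hRζ n) htail
    calc ‖(f x - ζ)⁻¹ - ∑ k ∈ Finset.range (n + 1), (-(ζ ^ (k + 1))⁻¹) * g x ^ k‖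
        = ‖((f x - ζ)⁻¹ - (g x - ζ)⁻¹) +
            ((g x - ζ)⁻¹ - ∑ k ∈ Finset.range (n + 1), (-(ζ ^ (k + 1))⁻¹) * g x ^ k)‖ := by
          rw [sub_add_sub_cancel]
      _ ≤ ‖(f x - ζ)⁻¹ - (g x - ζ)⁻¹‖ +
            ‖(g x - ζ)⁻¹ - ∑ k ∈ Finset.range (n + 1), (-(ζ ^ (k + 1))⁻¹) * g x ^ k‖ :=
          norm_add_le _ _
      _ ≤ ε := by linarith

/-! ### Boundedness of characters on SOdiamond -/

lemma CharOn.psi_norm_le (ψ : CharOn {f | SOdiamond f}) {f : ℝ → ℂ} {M : ℝ} (hf : SOdiamond f)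
    (hM0 : 0 ≤ M) (hM : ∀ᵐ x ∂(volume : Measure ℝ), ‖f x‖ ≤ M) : ‖ψ.φ f‖ ≤ M := by
  by_contra hcon
  push_neg at hcon
  set ζ : ℂ := ψ.φ f with hζ
  have hv : SOdiamond (fun x => (f x - ζ)⁻¹) := hf.invSub hM hM0 hcon
  have hfζ : SOdiamond (fun x => f x - ζ) := hf.sub ((SO.const none ζ).sodiamond)
  have hkey : (fun x => (fun y => f y - ζ) x * (fun y => (f y - ζ)⁻¹) x) =ᵐ[volume]
      (fun _ : ℝ => (1 : ℂ)) := by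
    filter_upwards [hM] with x hx
    have hne : f x - ζ ≠ 0 := by
      intro h
      have h1 : ‖ζ‖ - ‖f x‖ ≤ ‖ζ - f x‖ := norm_sub_norm_le ζ (f x)
      rw [← neg_sub (f x) ζ, norm_neg, h, norm_zero] at h1
      linarith
    exact mul_inv_cancel₀ hne
  have hmul := ψ.map_mul (fun x => f x - ζ) hfζ (fun x => (f x - ζ)⁻¹) hv
  have hprodmem : (fun x => (fun y => f y - ζ) x * (fun y => (f y - ζ)⁻¹) x) ∈
      {f | SOdiamond f} := hfζ.mul hv
  have h1 := ψ.map_ae _ _ hprodmem SOdiamond.one hkey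
  rw [ψ.map_one] at h1
  have hsub : ψ.φ (fun x => f x - ζ) = ψ.φ f - ζ := by
    have e := CharOn.sub' ψ (a := f) (b := fun _ => ζ) hf ((SO.const none ζ).sodiamond)
      (((SO.const none ζ).sodiamond).smul (-1))
    rw [e, CharOn.const' ψ SOdiamond.one ζ]
  rw [h1, hsub, ← hζ, sub_self, zero_mul] at hmul
  exact one_ne_zero (α := ℂ) hmul

end AuxSOExt6
section AuxSOExt7

/-! ### NearAll: approximability near t by SO_t functions -/

lemma SO.nearAll_self {t : Option ℝ} {f : ℝ → ℂ} (hf : SO t f) : NearAll t f := fun ε hε =>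
  ⟨f, hf, SmallAt.of_ae (Filter.Eventually.of_forall fun x => by simpa using hε.le)⟩

lemma nearAll_of_continuousAt {f : ℝ → ℂ} {lam : ℝ} (hf : ContinuousAt f lam) :
    NearAll (some lam) f := by
  intro ε hε
  obtain ⟨δ, hδ, hδ'⟩ := Metric.continuousAt_iff.1 hf ε hε
  refine ⟨fun _ => f lam, SO.const _ _, ⟨δ, hδ, Filter.Eventually.of_forall fun x hx => ?_⟩⟩
  rw [← dist_eq_norm]
  exact (hδ' hx).le

lemma nearAll_of_tendsto {f : ℝ → ℂ} {L : ℂ} (hL : Tendsto f (cocompact ℝ) (𝓝 L)) :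
    NearAll none f := by
  intro ε hε
  have hev : {x : ℝ | dist (f x) L < ε} ∈ cocompact ℝ := hL (Metric.ball_mem_nhds L hε)
  obtain ⟨R, hR0, hR⟩ := eventually_cocompact_abs_gt hev
  refine ⟨fun _ => L, SO.const _ _, ⟨R, hR0, Filter.Eventually.of_forall fun x hx => ?_⟩⟩
  rw [← dist_eq_norm]
  exact (hR x hx).le

lemma SOgen.nearAll {f₀ : ℝ → ℂ} (hf₀ : SOgen f₀) (t : Option ℝ) : NearAll t f₀ := by
  induction hf₀ with
  | base t' f h =>
    by_cases heq : t' = t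
    · exact (heq ▸ h).nearAll_self
    · cases t with
      | some lam =>
        cases t' with
        | some mu =>
          have hmu : mu ≠ lam := fun hc => heq (by rw [hc])
          have hca : ContinuousAt f lam := by
            refine h.2.1.continuousAt (IsOpen.mem_nhds isOpen_compl_singleton ?_)
            simpa using fun hc => hmu hc.symm
          exact nearAll_of_continuousAt hca
        | none => exact nearAll_of_continuousAt h.2.1.continuousAt
      | none =>
        cases t' with
        | some mu =>
          obtain ⟨L, hL⟩ := h.2.2.1
          exact nearAll_of_tendsto hL
        | none => exact absurd rfl heq
  | @add f g hf hg ihf ihg =>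
    intro ε hε
    obtain ⟨a, ha, hsa⟩ := ihf (ε / 2) (by linarith)
    obtain ⟨b, hb, hsb⟩ := ihg (ε / 2) (by linarith)
    refine ⟨fun x => a x + b x, ha.add hb,
      SmallAt.raw hsa hsb (Filter.Eventually.of_forall fun x h1 h2 => ?_)⟩
    calc ‖(f x + g x) - (a x + b x)‖ = ‖(f x - a x) + (g x - b x)‖ := by ring_nf
      _ ≤ ‖f x - a x‖ + ‖g x - b x‖ := norm_add_le _ _
      _ ≤ ε := by linarith
  | @mul f g hf hg ihf ihg =>
    intro ε hε
    obtain ⟨Mf, hMf0, hMf⟩ := hf.bdd'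
    obtain ⟨Mg, hMg0, hMg⟩ := hg.bdd'
    have hC : 0 < Mf + Mg + 2 := by linarith
    set ε' : ℝ := min 1 (ε / (Mf + Mg + 2)) with hε'
    have hε'0 : 0 < ε' := lt_min one_pos (by positivity)
    obtain ⟨a, ha, hsa⟩ := ihf ε' hε'0
    obtain ⟨b, hb, hsb⟩ := ihg ε' hε'0
    refine ⟨fun x => a x * b x, ha.mul hb,
      SmallAt.raw hsa hsb (Filter.Eventually.of_forall fun x h1 h2 => ?_)⟩
    have hbx : ‖b x‖ ≤ Mg + 1 := by
      calc ‖b x‖ = ‖g x - (g x - b x)‖ := by ring_nf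
        _ ≤ ‖g x‖ + ‖g x - b x‖ := norm_sub_le _ _
        _ ≤ Mg + 1 := add_le_add (hMg x) (le_trans h2 (min_le_left _ _))
    calc ‖f x * g x - a x * b x‖ = ‖f x * (g x - b x) + (f x - a x) * b x‖ := by ring_nf
      _ ≤ ‖f x * (g x - b x)‖ + ‖(f x - a x) * b x‖ := norm_add_le _ _
      _ = ‖f x‖ * ‖g x - b x‖ + ‖f x - a x‖ * ‖b x‖ := by rw [norm_mul, norm_mul]
      _ ≤ Mf * ε' + ε' * (Mg + 1) :=
          add_le_add (mul_le_mul (hMf x) h2 (norm_nonneg _) hMf0)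
            (mul_le_mul h1 hbx (norm_nonneg _) hε'0.le)
      _ = (Mf + Mg + 1) * ε' := by ring
      _ ≤ (Mf + Mg + 2) * (ε / (Mf + Mg + 2)) := by
          apply mul_le_mul (by linarith) (min_le_right _ _) hε'0.le (by linarith)
      _ = ε := by field_simp
  | @smul c f hf ihf =>
    intro ε hε
    have hc1 : 0 < ‖c‖ + 1 := by positivity
    obtain ⟨a, ha, hsa⟩ := ihf (ε / (‖c‖ + 1)) (by positivity)
    refine ⟨fun x => c * a x, SO.smul c ha,
      SmallAt.raw hsa hsa (Filter.Eventually.of_forall fun x h1 _ => ?_)⟩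
    calc ‖c * f x - c * a x‖ = ‖c‖ * ‖f x - a x‖ := by rw [← norm_mul]; ring_nf
      _ ≤ ‖c‖ * (ε / (‖c‖ + 1)) := mul_le_mul_of_nonneg_left h1 (norm_nonneg c)
      _ ≤ (‖c‖ + 1) * (ε / (‖c‖ + 1)) := by
          apply mul_le_mul_of_nonneg_right (by linarith) (by positivity)
      _ = ε := by field_simp
  | @star f hf ihf =>
    intro ε hε
    obtain ⟨a, ha, hsa⟩ := ihf ε hε
    refine ⟨fun x => (starRingEnd ℂ) (a x), ha.conj,
      SmallAt.raw hsa hsa (Filter.Eventually.of_forall fun x h1 _ => ?_)⟩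
    calc ‖(starRingEnd ℂ) (f x) - (starRingEnd ℂ) (a x)‖
        = ‖(starRingEnd ℂ) (f x - a x)‖ := by rw [map_sub]
      _ = ‖f x - a x‖ := RCLike.norm_conj _
      _ ≤ ε := h1

lemma SOdiamond.nearAll {f : ℝ → ℂ} (hf : SOdiamond f) (t : Option ℝ) : NearAll t f := by
  intro ε hε
  obtain ⟨_, _, happ⟩ := sodiamond_iff.1 hf
  obtain ⟨g, hg, hga⟩ := happ (ε / 2) (by linarith)
  obtain ⟨a, ha, hsa⟩ := hg.nearAll t (ε / 2) (by linarith)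
  refine ⟨a, ha, SmallAt.raw hsa (SmallAt.of_ae hga) (Filter.Eventually.of_forall
    fun x h1 h2 => ?_)⟩
  calc ‖f x - a x‖ = ‖(f x - g x) + (g x - a x)‖ := by ring_nf
    _ ≤ ‖f x - g x‖ + ‖g x - a x‖ := norm_add_le _ _
    _ ≤ ε := by linarith

/-! ### Val combinators -/

variable {t : Option ℝ} {η : CharOn {f | SO t f}}

lemma Val.congr_ae {f g : ℝ → ℂ} {z : ℂ} (hfg : f =ᵐ[volume] g) (h : Val t η f z) :
    Val t η g z := by
  intro ε hε
  obtain ⟨a, ha, hs, hc⟩ := h ε hε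
  refine ⟨a, ha, SmallAt.congr ?_ hs, hc⟩
  filter_upwards [hfg] with x hx
  rw [hx]

lemma Val.add {f g : ℝ → ℂ} {z w : ℂ} (hf : Val t η f z) (hg : Val t η g w) :
    Val t η (fun x => f x + g x) (z + w) := by
  intro ε hε
  obtain ⟨a, ha, hsa, hca⟩ := hf (ε / 2) (by linarith)
  obtain ⟨b, hb, hsb, hcb⟩ := hg (ε / 2) (by linarith)
  refine ⟨fun x => a x + b x, ha.add hb, ?_, ?_⟩
  · refine SmallAt.raw hsa hsb (Filter.Eventually.of_forall fun x h1 h2 => ?_)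
    calc ‖(f x + g x) - (a x + b x)‖ = ‖(f x - a x) + (g x - b x)‖ := by ring_nf
      _ ≤ ‖f x - a x‖ + ‖g x - b x‖ := norm_add_le _ _
      _ ≤ ε := by linarith
  · rw [η.map_add a ha b hb]
    calc ‖(η.φ a + η.φ b) - (z + w)‖ = ‖(η.φ a - z) + (η.φ b - w)‖ := by ring_nf
      _ ≤ ‖η.φ a - z‖ + ‖η.φ b - w‖ := norm_add_le _ _
      _ ≤ ε := by linarith

lemma Val.smul (c : ℂ) {f : ℝ → ℂ} {z : ℂ} (hf : Val t η f z) :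
    Val t η (fun x => c * f x) (c * z) := by
  intro ε hε
  have hc1 : 0 < ‖c‖ + 1 := by positivity
  obtain ⟨a, ha, hsa, hca⟩ := hf (ε / (‖c‖ + 1)) (by positivity)
  have hkey : ∀ u v : ℂ, ‖u - v‖ ≤ ε / (‖c‖ + 1) → ‖c * u - c * v‖ ≤ ε := by
    intro u v huv
    calc ‖c * u - c * v‖ = ‖c‖ * ‖u - v‖ := by rw [← norm_mul]; ring_nf
      _ ≤ ‖c‖ * (ε / (‖c‖ + 1)) := mul_le_mul_of_nonneg_left huv (norm_nonneg c)
      _ ≤ (‖c‖ + 1) * (ε / (‖c‖ + 1)) := by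
          apply mul_le_mul_of_nonneg_right (by linarith) (by positivity)
      _ = ε := by field_simp
  refine ⟨fun x => c * a x, SO.smul c ha, ?_, ?_⟩
  · exact SmallAt.raw hsa hsa (Filter.Eventually.of_forall fun x h1 _ => hkey (f x) (a x) h1)
  · rw [η.map_smul c a ha]
    have := hkey (η.φ a) z hca
    calc ‖c * η.φ a - c * z‖ ≤ ε := this

lemma Val.mul {f g : ℝ → ℂ} {z w : ℂ} {Mf Mg : ℝ}
    (hMf : ∀ᵐ x ∂(volume : Measure ℝ), ‖f x‖ ≤ Mf) (hMf0 : 0 ≤ Mf)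
    (hMg : ∀ᵐ x ∂(volume : Measure ℝ), ‖g x‖ ≤ Mg) (hMg0 : 0 ≤ Mg)
    (hf : Val t η f z) (hg : Val t η g w) : Val t η (fun x => f x * g x) (z * w) := by
  intro ε hε
  set C : ℝ := Mf + Mg + ‖z‖ + ‖w‖ + 3 with hC
  have hC0 : 0 < C := by positivity
  set ε' : ℝ := min 1 (ε / C) with hε'
  have hε'0 : 0 < ε' := lt_min one_pos (by positivity)
  have hε'1 : ε' ≤ 1 := min_le_left _ _
  have hε'C : C * ε' ≤ ε := by
    calc C * ε' ≤ C * (ε / C) := mul_le_mul_of_nonneg_left (min_le_right _ _) hC0.le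
      _ = ε := by field_simp
  obtain ⟨a, ha, hsa, hca⟩ := hf ε' hε'0
  obtain ⟨b, hb, hsb, hcb⟩ := hg ε' hε'0
  refine ⟨fun x => a x * b x, ha.mul hb, ?_, ?_⟩
  · refine SmallAt.raw hsa hsb ?_
    filter_upwards [hMf, hMg] with x h3 h4 h1 h2
    have hbx : ‖b x‖ ≤ Mg + 1 := by
      calc ‖b x‖ = ‖g x - (g x - b x)‖ := by ring_nf
        _ ≤ ‖g x‖ + ‖g x - b x‖ := norm_sub_le _ _
        _ ≤ Mg + 1 := add_le_add h4 (le_trans h2 hε'1)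
    calc ‖f x * g x - a x * b x‖ = ‖f x * (g x - b x) + (f x - a x) * b x‖ := by ring_nf
      _ ≤ ‖f x * (g x - b x)‖ + ‖(f x - a x) * b x‖ := norm_add_le _ _
      _ = ‖f x‖ * ‖g x - b x‖ + ‖f x - a x‖ * ‖b x‖ := by rw [norm_mul, norm_mul]
      _ ≤ Mf * ε' + ε' * (Mg + 1) :=
          add_le_add (mul_le_mul h3 h2 (norm_nonneg _) hMf0)
            (mul_le_mul h1 hbx (norm_nonneg _) hε'0.le)
      _ = (Mf + Mg + 1) * ε' := by ring
      _ ≤ C * ε' := by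
          apply mul_le_mul_of_nonneg_right ?_ hε'0.le
          rw [hC]
          have := norm_nonneg z
          have := norm_nonneg w
          linarith
      _ ≤ ε := hε'C
  · rw [η.map_mul a ha b hb]
    have hna : ‖η.φ a‖ ≤ ‖z‖ + 1 := by
      calc ‖η.φ a‖ = ‖z + (η.φ a - z)‖ := by ring_nf
        _ ≤ ‖z‖ + ‖η.φ a - z‖ := norm_add_le _ _
        _ ≤ ‖z‖ + 1 := by linarith [le_trans hca hε'1]
    calc ‖η.φ a * η.φ b - z * w‖ = ‖η.φ a * (η.φ b - w) + (η.φ a - z) * w‖ := by ring_nf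
      _ ≤ ‖η.φ a * (η.φ b - w)‖ + ‖(η.φ a - z) * w‖ := norm_add_le _ _
      _ = ‖η.φ a‖ * ‖η.φ b - w‖ + ‖η.φ a - z‖ * ‖w‖ := by rw [norm_mul, norm_mul]
      _ ≤ (‖z‖ + 1) * ε' + ε' * ‖w‖ :=
          add_le_add (mul_le_mul hna hcb (norm_nonneg _) (by positivity))
            (mul_le_mul_of_nonneg_right hca (norm_nonneg _))
      _ = (‖z‖ + 1 + ‖w‖) * ε' := by ring
      _ ≤ C * ε' := by
          apply mul_le_mul_of_nonneg_right ?_ hε'0.le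
          rw [hC]
          linarith
      _ ≤ ε := hε'C

lemma Val.self {f : ℝ → ℂ} (hf : SO t f) : Val t η f (η.φ f) := fun ε hε =>
  ⟨f, hf, SmallAt.of_ae (Filter.Eventually.of_forall fun x => by simpa using hε.le),
    by simpa using hε.le⟩

lemma Val.one : Val t η (fun _ => (1 : ℂ)) 1 := by
  have := Val.self (η := η) (SO.one t)
  rwa [η.map_one] at this

/-! ### Smallness for characters on SOdiamond that agree with η on SO_t -/

lemma xi_small {t : Option ℝ} {η : CharOn {f | SO t f}} (hη : InFiber {f | SO t f} η t)
    (ξ' : CharOn {f | SOdiamond f}) (hagr : ∀ f : ℝ → ℂ, SO t f → ξ'.φ f = η.φ f)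
    {b : ℝ → ℂ} {c : ℝ} (hb : SOdiamond b) (hc : 0 ≤ c) (hs : SmallAt t b c) :
    ‖ξ'.φ b‖ ≤ c := by
  cases t with
  | some lam =>
    obtain ⟨δ, hδ, hae⟩ := hs
    obtain ⟨h, hCR, hl1, hle1, hout⟩ := cutoff_some lam hδ
    have hso : SO (some lam) h := hCR.so _
    have hmem : SOdiamond h := hso.sodiamond
    have hξh : ξ'.φ h = 1 := by rw [hagr h hso, hη h hso hCR, hl1]
    have hmul := ξ'.map_mul b hb h hmem
    rw [hξh, mul_one] at hmul
    rw [← hmul]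
    refine CharOn.psi_norm_le ξ' (hb.mul hmem) hc ?_
    filter_upwards [hae] with x hx
    by_cases hdx : dist x lam < δ
    · calc ‖b x * h x‖ = ‖b x‖ * ‖h x‖ := norm_mul _ _
        _ ≤ c * 1 := mul_le_mul (hx hdx) (hle1 x) (norm_nonneg _) hc
        _ = c := mul_one c
    · push_neg at hdx
      rw [hout x hdx, mul_zero, norm_zero]
      exact hc
  | none =>
    obtain ⟨R, hR, hae⟩ := hs
    obtain ⟨h, hCR, hlim, hle1, hout⟩ := cutoff_none hR
    have hso : SO none h := hCR.so _
    have hmem : SOdiamond h := hso.sodiamond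
    have hξh : ξ'.φ h = 1 := by rw [hagr h hso, hη h hso hCR 1 hlim]
    have hmul := ξ'.map_mul b hb h hmem
    rw [hξh, mul_one] at hmul
    rw [← hmul]
    refine CharOn.psi_norm_le ξ' (hb.mul hmem) hc ?_
    filter_upwards [hae] with x hx
    by_cases hdx : R < |x|
    · calc ‖b x * h x‖ = ‖b x‖ * ‖h x‖ := norm_mul _ _
        _ ≤ c * 1 := mul_le_mul (hx hdx) (hle1 x) (norm_nonneg _) hc
        _ = c := mul_one c
    · push_neg at hdx
      rw [hout x hdx, mul_zero, norm_zero]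
      exact hc

lemma fiber_of_agree {t : Option ℝ} {η : CharOn {f | SO t f}} (hη : InFiber {f | SO t f} η t)
    (ξ : CharOn {f | SOdiamond f}) (hagr : ∀ f : ℝ → ℂ, SO t f → ξ.φ f = η.φ f) :
    InFiber {f | SOdiamond f} ξ t := by
  cases t with
  | some lam =>
    intro f hfS hCR
    have hso : SO (some lam) f := hCR.so _
    rw [hagr f hso]
    exact hη f hso hCR
  | none =>
    intro f hfS hCR L hL
    have hso : SO none f := hCR.so _
    rw [hagr f hso]
    exact hη f hso hCR L hL

end AuxSOExt7
/-- For every t ∈ Ṙ, every character in the fiber M_t(SO_t) extends uniquely to a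
character in the fiber M_t(SO^◇); hence M_t(SO_t) = M_t(SO^◇). -/
theorem fibers_SOt_eq_fibers_SOdiamond (t : Option ℝ) (η : CharOn {f | SO t f})
    (hη : InFiber {f | SO t f} η t) :
    ∃ ξ : CharOn {f | SOdiamond f}, InFiber {f | SOdiamond f} ξ t ∧
      (∀ f : ℝ → ℂ, SO t f → ξ.φ f = η.φ f) ∧
      ∀ ξ' : CharOn {f | SOdiamond f}, InFiber {f | SOdiamond f} ξ' t →
        (∀ f : ℝ → ℂ, SO t f → ξ'.φ f = η.φ f) →
        ∀ f : ℝ → ℂ, SOdiamond f → ξ'.φ f = ξ.φ f := by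
  classical
  set Φ : (ℝ → ℂ) → ℂ := fun f => if h : ∃ z, Val t η f z then h.choose else 0 with hΦ
  have hΦspec : ∀ f z, Val t η f z → Φ f = z := by
    intro f z hv
    have hex : ∃ z, Val t η f z := ⟨z, hv⟩
    rw [hΦ]
    simp only
    rw [dif_pos hex]
    exact Val.unique hη hex.choose_spec hv
  have hval : ∀ f, SOdiamond f → Val t η f (Φ f) := by
    intro f hf
    obtain ⟨z, hz⟩ := nearAll_val hη (hf.nearAll t)
    rw [hΦspec f z hz]
    exact hz
  have hagree : ∀ f : ℝ → ℂ, SO t f → Φ f = η.φ f := fun f hf => hΦspec f _ (Val.self hf)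
  set ξ : CharOn {f | SOdiamond f} :=
    { φ := Φ
      map_ae := by
        intro f g hf hg hfg
        exact (Val.unique hη (Val.congr_ae hfg (hval f hf)) (hval g hg)).symm ▸
          Val.unique hη (Val.congr_ae hfg (hval f hf)) (hval g hg) ▸ rfl
      map_add := by
        intro f hf g hg
        exact hΦspec _ _ ((hval f hf).add (hval g hg))
      map_mul := by
        intro f hf g hg
        obtain ⟨Mf, hMf0, hMf⟩ := SOdiamond.aebound hf
        obtain ⟨Mg, hMg0, hMg⟩ := SOdiamond.aebound hg
        exact hΦspec _ _ (Val.mul hMf hMf0 hMg hMg0 (hval f hf) (hval g hg))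
      map_smul := by
        intro c f hf
        exact hΦspec _ _ (Val.smul c (hval f hf))
      map_one := hΦspec _ _ Val.one } with hξ
  have hξφ : ∀ f, ξ.φ f = Φ f := fun f => rfl
  refine ⟨ξ, fiber_of_agree hη ξ (fun f hf => (hξφ f).trans (hagree f hf)), 
    fun f hf => (hξφ f).trans (hagree f hf), ?_⟩
  intro ξ' hfib' hagr' f hf
  rw [hξφ f]
  have hv : Val t η f (Φ f) := hval f hf
  have key : ∀ ε : ℝ, 0 < ε → ‖ξ'.φ f - Φ f‖ ≤ 2 * ε := by
    intro ε hε
    obtain ⟨a, ha, hs, hc⟩ := hv ε hε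
    have hamem : SOdiamond a := ha.sodiamond
    have hsub : ξ'.φ (fun x => f x - a x) = ξ'.φ f - ξ'.φ a :=
      CharOn.sub' ξ' hf hamem (hamem.smul (-1))
    have hsmall : ‖ξ'.φ (fun x => f x - a x)‖ ≤ ε :=
      xi_small hη ξ' hagr' (hf.sub hamem) hε.le hs
    have hξa : ξ'.φ a = η.φ a := hagr' a ha
    calc ‖ξ'.φ f - Φ f‖ = ‖(ξ'.φ f - ξ'.φ a) + (ξ'.φ a - Φ f)‖ := by rw [sub_add_sub_cancel]
      _ ≤ ‖ξ'.φ f - ξ'.φ a‖ + ‖ξ'.φ a - Φ f‖ := norm_add_le _ _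
      _ ≤ ε + ε := by
          refine add_le_add ?_ ?_
          · rw [← hsub]; exact hsmall
          · rw [hξa]; exact hc
      _ = 2 * ε := by ring
  by_contra hne
  have hpos : 0 < ‖ξ'.φ f - Φ f‖ := by
    rw [norm_pos_iff, sub_ne_zero]
    exact hne
  have := key (‖ξ'.φ f - Φ f‖ / 4) (by linarith)
  linarith
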